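/- arXiv:1906.06488 — 5 statements merged into one kernel-verified Lean document; each statement's English description precedes it below -/
import Mathlib

section
/- For every integer n ≥ 6, the super-connectivity of the Johnson graph J(n,3) equals 5n−18. -/
set_option maxHeartbeats 1600000


open SimpleGraph Finset

/-- Vertex type of the Johnson graph `J(n,k)`: the `k`-element subsets of `[n]`. -/
abbrev JV (n k : ℕ) := {s : Finset (Fin n) // s.card = k}

/-- The Johnson graph `J(n,k)`: two `k`-subsets are adjacent iff their
intersection has exactly `k-1` elements. -/
def johnsonGraph (n k : ℕ) : SimpleGraph (JV n k) where
  Adj u v := u ≠ v ∧ (u.val ∩ v.val).card = k - 1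
  symm := by
    constructor
    intro u v h
    exact ⟨h.1.symm, by rw [Finset.inter_comm]; exact h.2⟩
  loopless := by
    constructor
    intro u h
    exact h.1 rfl

/-- `S` is a vertex-cut of `G` if deleting `S` disconnects `G`. -/
def IsVertexCut {V : Type*} (G : SimpleGraph V) (S : Set V) : Prop :=
  ¬ (G.induce Sᶜ).Preconnected

/-- `S` is a super vertex-cut of `G` if deleting `S` disconnects `G` and
leaves no isolated vertex. -/
def IsSuperVertexCut {V : Type*} (G : SimpleGraph V) (S : Set V) : Prop :=
  IsVertexCut G S ∧ ∀ v : ↥Sᶜ, ∃ w : ↥Sᶜ, (G.induce Sᶜ).Adj v w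

/-- The super-connectivity of `G`: the least cardinality of a super vertex-cut,
or `⊤` if none exists. -/
noncomputable def superConnectivity {V : Type*} [Fintype V] (G : SimpleGraph V) : ℕ∞ :=
  sInf {m : ℕ∞ | ∃ S : Finset V, IsSuperVertexCut G ↑S ∧ (S.card : ℕ∞) = m}

/-- `S` is a minimum super vertex-cut of `G`. -/
def IsMinSuperVertexCut {V : Type*} [Fintype V] (G : SimpleGraph V) (S : Finset V) : Prop :=
  IsSuperVertexCut G ↑S ∧ ∀ T : Finset V, IsSuperVertexCut G ↑T → S.card ≤ T.card


namespace JS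

attribute [local instance] Classical.propDecidable

variable {n : ℕ}

private lemma prod_lb {a b s t : ℕ} (ha : a ≤ s) (hb : b ≤ t) :
    a * t + b * s ≤ s * t + a * b := by
  obtain ⟨u, rfl⟩ := Nat.le.dest ha
  obtain ⟨v, rfl⟩ := Nat.le.dest hb
  nlinarith [Nat.zero_le (u*v)]

private lemma card_triple {α : Type*} [DecidableEq α] {a b c : α}
    (hab : a ≠ b) (hac : a ≠ c) (hbc : b ≠ c) : ({a, b, c} : Finset α).card = 3 := by
  rw [Finset.card_insert_of_notMem (by simp [hab, hac]),
      Finset.card_insert_of_notMem (by simp [hbc]), Finset.card_singleton]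

private lemma card_quad {α : Type*} [DecidableEq α] {a b c d : α}
    (hab : a ≠ b) (hac : a ≠ c) (had : a ≠ d) (hbc : b ≠ c) (hbd : b ≠ d) (hcd : c ≠ d) :
    ({a, b, c, d} : Finset α).card = 4 := by
  rw [Finset.card_insert_of_notMem (by simp [hab, hac, had]), card_triple hbc hbd hcd]

/-- `r`-degree of `v`. -/
private noncomputable def bd (r : Fin n → Fin n → Prop) (v : Fin n) : ℕ :=
  ((univ.erase v).filter (fun w => r v w)).card

/-- non-`r`-degree of `v`. -/
private noncomputable def rd (r : Fin n → Fin n → Prop) (v : Fin n) : ℕ :=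
  ((univ.erase v).filter (fun w => ¬ r v w)).card

private lemma bd_add_rd (r : Fin n → Fin n → Prop) (hn : 1 ≤ n) (v : Fin n) :
    bd r v + rd r v + 1 = n := by
  have h1 : bd r v + rd r v = (univ.erase v).card :=
    Finset.card_filter_add_card_filter_not _
  have h2 : (univ.erase v).card + 1 = (univ : Finset (Fin n)).card :=
    Finset.card_erase_add_one (mem_univ v)
  simp only [Finset.card_univ, Fintype.card_fin] at h2
  omega

private lemma complete_of_rd_zero {r : Fin n → Fin n → Prop} {v : Fin n} (h : rd r v = 0) :
    ∀ w, w ≠ v → r v w := by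
  intro w hw
  by_contra hc
  have hm : w ∈ (univ.erase v).filter (fun w => ¬ r v w) := by
    simp [Finset.mem_erase, hw, hc]
  have hp := Finset.card_pos.mpr ⟨w, hm⟩
  simp only [rd] at h
  omega

private lemma bd_ge_two {r : Fin n → Fin n → Prop} {v p q : Fin n}
    (hpv : p ≠ v) (hqv : q ≠ v) (hpq : p ≠ q) (hp : r v p) (hq : r v q) :
    2 ≤ bd r v := by
  have hsub : ({p, q} : Finset (Fin n)) ⊆ (univ.erase v).filter (fun w => r v w) := by
    intro w hw
    simp only [Finset.mem_insert, Finset.mem_singleton] at hw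
    rcases hw with rfl | rfl <;> simp [Finset.mem_erase, hpv, hqv, hp, hq]
  calc 2 = ({p, q} : Finset (Fin n)).card := (Finset.card_pair hpq).symm
    _ ≤ _ := Finset.card_le_card hsub

private lemma bd_ge_three {r : Fin n → Fin n → Prop} {v p q s : Fin n}
    (hpv : p ≠ v) (hqv : q ≠ v) (hsv : s ≠ v) (hpq : p ≠ q) (hps : p ≠ s) (hqs : q ≠ s)
    (hp : r v p) (hq : r v q) (hs : r v s) :
    3 ≤ bd r v := by
  have hsub : ({p, q, s} : Finset (Fin n)) ⊆ (univ.erase v).filter (fun w => r v w) := by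
    intro w hw
    simp only [Finset.mem_insert, Finset.mem_singleton] at hw
    rcases hw with rfl | rfl | rfl <;> simp [Finset.mem_erase, hpv, hqv, hsv, hp, hq, hs]
  calc 3 = ({p, q, s} : Finset (Fin n)).card := (card_triple hpq hps hqs).symm
    _ ≤ _ := Finset.card_le_card hsub

private lemma rd_ge_two {r : Fin n → Fin n → Prop} {v p q : Fin n}
    (hpv : p ≠ v) (hqv : q ≠ v) (hpq : p ≠ q) (hp : ¬ r v p) (hq : ¬ r v q) :
    2 ≤ rd r v := by
  have hsub : ({p, q} : Finset (Fin n)) ⊆ (univ.erase v).filter (fun w => ¬ r v w) := by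
    intro w hw
    simp only [Finset.mem_insert, Finset.mem_singleton] at hw
    rcases hw with rfl | rfl <;> simp [Finset.mem_erase, hpv, hqv, hp, hq]
  calc 2 = ({p, q} : Finset (Fin n)).card := (Finset.card_pair hpq).symm
    _ ≤ _ := Finset.card_le_card hsub

private lemma rd_ge_three {r : Fin n → Fin n → Prop} {v p q s : Fin n}
    (hpv : p ≠ v) (hqv : q ≠ v) (hsv : s ≠ v) (hpq : p ≠ q) (hps : p ≠ s) (hqs : q ≠ s)
    (hp : ¬ r v p) (hq : ¬ r v q) (hs : ¬ r v s) :
    3 ≤ rd r v := by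
  have hsub : ({p, q, s} : Finset (Fin n)) ⊆ (univ.erase v).filter (fun w => ¬ r v w) := by
    intro w hw
    simp only [Finset.mem_insert, Finset.mem_singleton] at hw
    rcases hw with rfl | rfl | rfl <;> simp [Finset.mem_erase, hpv, hqv, hsv, hp, hq, hs]
  calc 3 = ({p, q, s} : Finset (Fin n)).card := (card_triple hpq hps hqs).symm
    _ ≤ _ := Finset.card_le_card hsub

private lemma sum_ge_aux (hn : 6 ≤ n) {r : Fin n → Fin n → Prop}
    (hsymm : ∀ u v, r u v → r v u)
    {a b x y : Fin n}
    (hab : a ≠ b) (hax : a ≠ x) (hay : a ≠ y) (hbx : b ≠ x) (hby : b ≠ y) (hxy : x ≠ y)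
    (rab : r a b) (rax : r a x) (rbx : r b x) (ray : r a y) (rby : r b y)
    {a' b' x' y' : Fin n}
    (hab' : a' ≠ b') (hax' : a' ≠ x') (hay' : a' ≠ y') (hbx' : b' ≠ x') (hby' : b' ≠ y')
    (hxy' : x' ≠ y')
    (nab : ¬ r a' b') (nax : ¬ r a' x') (nbx : ¬ r b' x') (nay : ¬ r a' y') (nby : ¬ r b' y')
    {u0 : Fin n} (hu0 : rd r u0 = 0) :
    10 * n ≤ 36 + ∑ v, bd r v * rd r v := by
  have hsum : ∀ v, bd r v + rd r v + 1 = n := bd_add_rd r (by omega)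
  have nsab : ¬ r b' a' := fun h => nab (hsymm _ _ h)
  have nsax : ¬ r x' a' := fun h => nax (hsymm _ _ h)
  have nsbx : ¬ r x' b' := fun h => nbx (hsymm _ _ h)
  have nsay : ¬ r y' a' := fun h => nay (hsymm _ _ h)
  have nsby : ¬ r y' b' := fun h => nby (hsymm _ _ h)
  have hrd_a' : 3 ≤ rd r a' :=
    rd_ge_three hab'.symm hax'.symm hay'.symm hbx' hby' hxy' nab nax nay
  have hrd_b' : 3 ≤ rd r b' :=
    rd_ge_three hab' hbx'.symm hby'.symm hax' hay' hxy' nsab nbx nby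
  have hrd_x' : 2 ≤ rd r x' := rd_ge_two hax' hbx' hab' nsax nsbx
  have hrd_y' : 2 ≤ rd r y' := rd_ge_two hay' hby' hab' nsay nsby
  set C : Finset (Fin n) := univ.filter (fun v => rd r v = 0) with hC
  have hu0C : u0 ∈ C := by simp [hC, hu0]
  have hCpos : 1 ≤ C.card := Finset.card_pos.mpr ⟨u0, hu0C⟩
  have hnotC : ∀ v, v ∉ C → 1 ≤ rd r v := by
    intro v hv
    rcases Nat.eq_zero_or_pos (rd r v) with h | h
    · exact absurd (by simp [hC, h]) hv
    · exact h
  have hbdC : ∀ v, v ∉ C → C.card ≤ bd r v := by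
    intro v hv
    apply Finset.card_le_card
    intro u hu
    have hu' : rd r u = 0 := by simpa [hC] using hu
    have huv : v ≠ u := fun h => hv (h ▸ hu)
    have : r u v := complete_of_rd_zero hu' v huv
    simp only [Finset.mem_filter, Finset.mem_erase]
    exact ⟨⟨huv.symm, Finset.mem_univ u⟩, hsymm _ _ this⟩
  set Q' : Finset (Fin n) := {a', b', x', y'} with hQ'
  have hQ'card : Q'.card = 4 := card_quad hab' hax' hay' hbx' hby' hxy'
  have hQ'rd : ∀ v ∈ Q', 2 ≤ rd r v := by
    intro v hv
    simp only [hQ', Finset.mem_insert, Finset.mem_singleton] at hv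
    rcases hv with rfl | rfl | rfl | rfl
    · omega
    · omega
    · exact hrd_x'
    · exact hrd_y'
  have hCQ'disj : Disjoint C Q' := by
    rw [Finset.disjoint_left]
    intro v hvC hvQ
    have h1 : rd r v = 0 := by simpa [hC] using hvC
    have h2 := hQ'rd v hvQ
    omega
  have hmix : ∀ v, v ∉ C → n ≤ bd r v * rd r v + 2 := by
    intro v hv
    have h1 : 1 ≤ bd r v := le_trans hCpos (hbdC v hv)
    have h2 : 1 ≤ rd r v := hnotC v hv
    have h3 := prod_lb h1 h2
    have h4 := hsum v
    linarith
  -- sum decompositions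
  have hsplit : ∑ v ∈ univ \ (C ∪ Q'), bd r v * rd r v + ∑ v ∈ C ∪ Q', bd r v * rd r v
      = ∑ v, bd r v * rd r v := Finset.sum_sdiff (Finset.subset_univ _)
  have hCQsum : ∑ v ∈ C ∪ Q', bd r v * rd r v
      = ∑ v ∈ C, bd r v * rd r v + ∑ v ∈ Q', bd r v * rd r v := Finset.sum_union hCQ'disj
  have hQ'sum : ∑ v ∈ Q', bd r v * rd r v
      = bd r a' * rd r a' + (bd r b' * rd r b' + (bd r x' * rd r x' + bd r y' * rd r y')) := by
    rw [hQ', Finset.sum_insert (by simp [hab', hax', hay']),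
      Finset.sum_insert (by simp [hbx', hby']), Finset.sum_insert (by simp [hxy']),
      Finset.sum_singleton]
  have hmcard : (univ \ (C ∪ Q')).card + (C.card + 4) = n := by
    have hdd : (C ∪ Q').card = C.card + 4 := by
      rw [Finset.card_union_of_disjoint hCQ'disj, hQ'card]
    have h1 := Finset.card_sdiff_of_subset (Finset.subset_univ (C ∪ Q'))
    have h2 := Finset.card_le_card (Finset.subset_univ (C ∪ Q'))
    simp only [Finset.card_univ, Fintype.card_fin] at h1 h2
    omega
  have hrest : (univ \ (C ∪ Q')).card * n
      ≤ (∑ v ∈ univ \ (C ∪ Q'), bd r v * rd r v) + 2 * (univ \ (C ∪ Q')).card := by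
    have h1 : ∀ v ∈ univ \ (C ∪ Q'), n ≤ bd r v * rd r v + 2 := by
      intro v hv
      simp only [Finset.mem_sdiff, Finset.mem_union] at hv
      exact hmix v (fun h => hv.2 (Or.inl h))
    calc (univ \ (C ∪ Q')).card * n = ∑ _v ∈ univ \ (C ∪ Q'), n := by
          rw [Finset.sum_const, smul_eq_mul, mul_comm]
      _ ≤ ∑ v ∈ univ \ (C ∪ Q'), (bd r v * rd r v + 2) := Finset.sum_le_sum h1
      _ = _ := by rw [Finset.sum_add_distrib, Finset.sum_const, smul_eq_mul, mul_comm]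
  have ha'C : a' ∉ C := Finset.disjoint_right.mp hCQ'disj (by simp [hQ'])
  have hb'C : b' ∉ C := Finset.disjoint_right.mp hCQ'disj (by simp [hQ'])
  have hx'C : x' ∉ C := Finset.disjoint_right.mp hCQ'disj (by simp [hQ'])
  have hy'C : y' ∉ C := Finset.disjoint_right.mp hCQ'disj (by simp [hQ'])
  by_cases h3 : 3 ≤ C.card
  · -- four special vertices already give the bound
    have ta' : 3 * n ≤ bd r a' * rd r a' + 12 := by
      have hb3 : 3 ≤ bd r a' := le_trans h3 (hbdC a' ha'C)
      have := prod_lb hb3 hrd_a'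
      have := hsum a'
      linarith
    have tb' : 3 * n ≤ bd r b' * rd r b' + 12 := by
      have hb3 : 3 ≤ bd r b' := le_trans h3 (hbdC b' hb'C)
      have := prod_lb hb3 hrd_b'
      have := hsum b'
      linarith
    have tx' : 2 * n ≤ bd r x' * rd r x' + 6 := by
      have hb3 : 3 ≤ bd r x' := le_trans h3 (hbdC x' hx'C)
      have := prod_lb hb3 hrd_x'
      have := hsum x'
      linarith
    have ty' : 2 * n ≤ bd r y' * rd r y' + 6 := by
      have hb3 : 3 ≤ bd r y' := le_trans h3 (hbdC y' hy'C)
      have := prod_lb hb3 hrd_y'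
      have := hsum y'
      linarith
    have hontop : ∑ v ∈ Q', bd r v * rd r v ≤ ∑ v, bd r v * rd r v :=
      Finset.sum_le_sum_of_subset (Finset.subset_univ Q')
    rw [hQ'sum] at hontop
    linarith
  · by_cases h2c : C.card = 2
    · have hQbnd : ∀ v ∈ Q', 2 * n ≤ bd r v * rd r v + 6 := by
        intro v hv
        have hb2 : 2 ≤ bd r v := by
          have := hbdC v (Finset.disjoint_right.mp hCQ'disj hv)
          omega
        have hr2 : 2 ≤ rd r v := hQ'rd v hv
        have := prod_lb hb2 hr2
        have := hsum v
        linarith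
      have ta' := hQbnd a' (by simp [hQ'])
      have tb' := hQbnd b' (by simp [hQ'])
      have tx' := hQbnd x' (by simp [hQ'])
      have ty' := hQbnd y' (by simp [hQ'])
      have hm6 : (univ \ (C ∪ Q')).card + 6 = n := by omega
      have hmn : (univ \ (C ∪ Q')).card * 4 ≤ (univ \ (C ∪ Q')).card * n :=
        Nat.mul_le_mul_left _ (by omega)
      have h0 : 0 ≤ ∑ v ∈ C, bd r v * rd r v := Nat.zero_le _
      linarith
    · have hc1 : C.card = 1 := by omega
      obtain ⟨w0, hw0⟩ := Finset.card_eq_one.mp hc1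
      have hw0u : u0 = w0 := by
        have h := hu0C
        rw [hw0] at h
        simpa using h
      subst hw0u
      have hnotC1 : ∀ v, v ≠ u0 → v ∉ C := by
        intro v hv hvC
        rw [hw0] at hvC
        simp at hvC
        exact hv hvC
      have hmix1 : ∀ v, v ≠ u0 → n ≤ bd r v * rd r v + 2 :=
        fun v hv => hmix v (hnotC1 v hv)
      have htu0 : bd r u0 * rd r u0 = 0 := by rw [hu0, mul_zero]
      clear hw0
      -- finishing move given two good vertices
      have final : ∀ v₁ v₂ : Fin n, v₁ ≠ v₂ → v₁ ≠ u0 → v₂ ≠ u0 →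
          2 * n ≤ bd r v₁ * rd r v₁ + 6 → 2 * n ≤ bd r v₂ * rd r v₂ + 6 →
          10 * n ≤ 36 + ∑ v, bd r v * rd r v := by
        intro v₁ v₂ h12 h1u h2u hb1 hb2
        set P : Finset (Fin n) := {u0, v₁, v₂} with hP
        have hPcard : P.card = 3 := card_triple (Ne.symm h1u) (Ne.symm h2u) h12
        have hsplit2 : ∑ v ∈ univ \ P, bd r v * rd r v + ∑ v ∈ P, bd r v * rd r v
            = ∑ v, bd r v * rd r v := Finset.sum_sdiff (Finset.subset_univ _)
        have hPsum : ∑ v ∈ P, bd r v * rd r v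
            = bd r u0 * rd r u0 + (bd r v₁ * rd r v₁ + bd r v₂ * rd r v₂) := by
          rw [hP, Finset.sum_insert (by simp [Ne.symm h1u, Ne.symm h2u]),
            Finset.sum_insert (by simp [h12]), Finset.sum_singleton]
        have hcard2 : (univ \ P).card + 3 = n := by
          have h1 := Finset.card_sdiff_of_subset (Finset.subset_univ P)
          have h2 := Finset.card_le_card (Finset.subset_univ P)
          simp only [Finset.card_univ, Fintype.card_fin] at h1 h2
          omega
        have hrest2 : (univ \ P).card * n
            ≤ (∑ v ∈ univ \ P, bd r v * rd r v) + 2 * (univ \ P).card := by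
          have h1 : ∀ v ∈ univ \ P, n ≤ bd r v * rd r v + 2 := by
            intro v hv
            simp only [Finset.mem_sdiff, hP, Finset.mem_insert, Finset.mem_singleton] at hv
            exact hmix1 v (fun h => hv.2 (Or.inl h))
          calc (univ \ P).card * n = ∑ _v ∈ univ \ P, n := by
                rw [Finset.sum_const, smul_eq_mul, mul_comm]
            _ ≤ ∑ v ∈ univ \ P, (bd r v * rd r v + 2) := Finset.sum_le_sum h1
            _ = _ := by rw [Finset.sum_add_distrib, Finset.sum_const, smul_eq_mul, mul_comm]
        set m' := (univ \ P).card with hm'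
        have hm'3 : 3 ≤ m' := by omega
        obtain ⟨k, hk⟩ := Nat.le.dest hm'3
        have hmul : m' * n = m' * m' + 3 * m' := by
          have : n = m' + 3 := by omega
          rw [this]; ring
        have hsq : 5 * m' ≤ m' * m' + 6 := by nlinarith [Nat.zero_le (k * k)]
        linarith
      by_cases hM2 : 2 ≤ (univ.filter (fun v => 2 ≤ bd r v ∧ 2 ≤ rd r v)).card
      · obtain ⟨v₁, hv₁, v₂, hv₂, h12⟩ := Finset.one_lt_card.mp hM2
        simp only [Finset.mem_filter] at hv₁ hv₂
        have hb1 : 2 * n ≤ bd r v₁ * rd r v₁ + 6 := by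
          have := prod_lb hv₁.2.1 hv₁.2.2
          have := hsum v₁
          linarith
        have hb2 : 2 * n ≤ bd r v₂ * rd r v₂ + 6 := by
          have := prod_lb hv₂.2.1 hv₂.2.2
          have := hsum v₂
          linarith
        have h1u : v₁ ≠ u0 := by
          intro h
          rw [h] at hv₁
          omega
        have h2u : v₂ ≠ u0 := by
          intro h
          rw [h] at hv₂
          omega
        exact final v₁ v₂ h12 h1u h2u hb1 hb2
      · -- few doubly-mixed vertices: use the r-side K4⁻
        have hM2' : (univ.filter (fun v => 2 ≤ bd r v ∧ 2 ≤ rd r v)).card ≤ 1 := by omega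
        have rba : r b a := hsymm _ _ rab
        have rxa : r x a := hsymm _ _ rax
        have rxb : r x b := hsymm _ _ rbx
        have rya : r y a := hsymm _ _ ray
        have ryb : r y b := hsymm _ _ rby
        set Q : Finset (Fin n) := {a, b, x, y} with hQdef
        have hQcard : Q.card = 4 := card_quad hab hax hay hbx hby hxy
        have hQbd : ∀ v ∈ Q, 2 ≤ bd r v := by
          intro v hv
          simp only [hQdef, Finset.mem_insert, Finset.mem_singleton] at hv
          rcases hv with rfl | rfl | rfl | rfl
          · exact bd_ge_two hab.symm hax.symm hbx rab rax
          · exact bd_ge_two hab hbx.symm hax rba rbx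
          · exact bd_ge_two hax hbx hab rxa rxb
          · exact bd_ge_two hay hby hab rya ryb
        have hE3 : 3 ≤ (Q.erase u0).card := by
          by_cases hw : u0 ∈ Q
          · rw [Finset.card_erase_of_mem hw, hQcard]
          · rw [Finset.erase_eq_of_notMem hw, hQcard]; omega
        have hEf : (Q.erase u0).filter (fun v => 2 ≤ rd r v)
            ⊆ univ.filter (fun v => 2 ≤ bd r v ∧ 2 ≤ rd r v) := by
          intro v hv
          simp only [Finset.mem_filter] at hv ⊢
          exact ⟨Finset.mem_univ v, hQbd v (Finset.mem_of_mem_erase hv.1), hv.2⟩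
        have hcardEf : ((Q.erase u0).filter (fun v => 2 ≤ rd r v)).card ≤ 1 :=
          le_trans (Finset.card_le_card hEf) hM2'
        have hcc := Finset.card_filter_add_card_filter_not
          (s := Q.erase u0) (fun v => 2 ≤ rd r v)
        have hc2' : 2 ≤ ((Q.erase u0).filter (fun v => ¬ 2 ≤ rd r v)).card := by omega
        obtain ⟨w₁, hw₁, w₂, hw₂, hw12⟩ := Finset.one_lt_card.mp hc2'
        simp only [Finset.mem_filter, Finset.mem_erase] at hw₁ hw₂
        have hrdw₁ : rd r w₁ = 1 := by
          have := hnotC w₁ (hnotC1 w₁ hw₁.1.1)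
          omega
        have hrdw₂ : rd r w₂ = 1 := by
          have := hnotC w₂ (hnotC1 w₂ hw₂.1.1)
          omega
        have hz₁ : ∃ z, (univ.erase w₁).filter (fun w => ¬ r w₁ w) = {z} :=
          Finset.card_eq_one.mp hrdw₁
        have hz₂ : ∃ z, (univ.erase w₂).filter (fun w => ¬ r w₂ w) = {z} :=
          Finset.card_eq_one.mp hrdw₂
        obtain ⟨z₁, hz₁⟩ := hz₁
        obtain ⟨z₂, hz₂⟩ := hz₂
        have hr1 : ∀ v, v ≠ w₁ → v ≠ z₁ → r w₁ v := by
          intro v hvw hvz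
          by_contra hc
          have hm : v ∈ (univ.erase w₁).filter (fun w => ¬ r w₁ w) := by
            simp [Finset.mem_erase, hvw, hc]
          rw [hz₁] at hm
          simp at hm
          exact hvz hm
        have hr2 : ∀ v, v ≠ w₂ → v ≠ z₂ → r w₂ v := by
          intro v hvw hvz
          by_contra hc
          have hm : v ∈ (univ.erase w₂).filter (fun w => ¬ r w₂ w) := by
            simp [Finset.mem_erase, hvw, hc]
          rw [hz₂] at hm
          simp at hm
          exact hvz hm
        have hD2 : 2 ≤ (Q' \ {z₁, z₂}).card := by
          have h1 := Finset.le_card_sdiff ({z₁, z₂} : Finset (Fin n)) Q'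
          have h2 : ({z₁, z₂} : Finset (Fin n)).card ≤ 2 :=
            le_trans (Finset.card_insert_le _ _) (by simp)
          omega
        obtain ⟨v₁, hv₁, v₂, hv₂, h12⟩ := Finset.one_lt_card.mp hD2
        simp only [Finset.mem_sdiff, Finset.mem_insert, Finset.mem_singleton, not_or] at hv₁ hv₂
        have hu0w₁ : u0 ≠ w₁ := by
          intro h
          rw [h] at hu0
          omega
        have hu0w₂ : u0 ≠ w₂ := by
          intro h
          rw [h] at hu0
          omega
        have goodv : ∀ v, v ∈ Q' → v ≠ z₁ → v ≠ z₂ → 2 * n ≤ bd r v * rd r v + 6 := by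
          intro v hvQ hvz₁ hvz₂
          have hrdv : 2 ≤ rd r v := hQ'rd v hvQ
          have hvu0 : v ≠ u0 := by
            intro h
            rw [h] at hrdv
            omega
          have hvw₁ : v ≠ w₁ := by
            intro h
            rw [h] at hrdv
            omega
          have hvw₂ : v ≠ w₂ := by
            intro h
            rw [h] at hrdv
            omega
          have hbd3 : 3 ≤ bd r v :=
            bd_ge_three hvu0.symm hvw₁.symm hvw₂.symm hu0w₁ hu0w₂ hw12
              (hsymm _ _ (complete_of_rd_zero hu0 v hvu0))
              (hsymm _ _ (hr1 v hvw₁ hvz₁))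
              (hsymm _ _ (hr2 v hvw₂ hvz₂))
          have := prod_lb hbd3 hrdv
          have := hsum v
          linarith
        have hb1 := goodv v₁ hv₁.1 hv₁.2.1 hv₁.2.2
        have hb2 := goodv v₂ hv₂.1 hv₂.2.1 hv₂.2.2
        have h1u : v₁ ≠ u0 := by
          intro h
          have := hQ'rd v₁ hv₁.1
          rw [h] at this
          omega
        have h2u : v₂ ≠ u0 := by
          intro h
          have := hQ'rd v₂ hv₂.1
          rw [h] at this
          omega
        exact final v₁ v₂ h12 h1u h2u hb1 hb2

private lemma sum_ge (hn : 6 ≤ n) {r : Fin n → Fin n → Prop}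
    (hsymm : ∀ u v, r u v → r v u)
    {a b x y : Fin n}
    (hab : a ≠ b) (hax : a ≠ x) (hay : a ≠ y) (hbx : b ≠ x) (hby : b ≠ y) (hxy : x ≠ y)
    (rab : r a b) (rax : r a x) (rbx : r b x) (ray : r a y) (rby : r b y)
    {a' b' x' y' : Fin n}
    (hab' : a' ≠ b') (hax' : a' ≠ x') (hay' : a' ≠ y') (hbx' : b' ≠ x') (hby' : b' ≠ y')
    (hxy' : x' ≠ y')
    (nab : ¬ r a' b') (nax : ¬ r a' x') (nbx : ¬ r b' x') (nay : ¬ r a' y') (nby : ¬ r b' y') :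
    10 * n ≤ 36 + ∑ v, bd r v * rd r v := by
  by_cases hCex : ∃ u, rd r u = 0
  · obtain ⟨u0, hu0⟩ := hCex
    exact sum_ge_aux hn hsymm hab hax hay hbx hby hxy rab rax rbx ray rby
      hab' hax' hay' hbx' hby' hxy' nab nax nbx nay nby hu0
  · by_cases hDex : ∃ u, bd r u = 0
    · obtain ⟨u0, hu0⟩ := hDex
      have hsymm' : ∀ u v : Fin n, ¬ r u v → ¬ r v u := fun u v h hc => h (hsymm v u hc)
      have hrd' : ∀ v, rd (fun u w => ¬ r u w) v = bd r v := by
        intro v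
        unfold rd bd
        congr 1
        ext w
        simp [not_not]
      have hbd' : ∀ v, bd (fun u w => ¬ r u w) v = rd r v := by
        intro v
        unfold bd rd
        congr 1
        ext w
        simp
      have hu0' : rd (fun u w => ¬ r u w) u0 = 0 := by rw [hrd' u0]; exact hu0
      have h := sum_ge_aux (r := fun u w => ¬ r u w) hn hsymm'
        hab' hax' hay' hbx' hby' hxy' nab nax nbx nay nby
        hab hax hay hbx hby hxy
        (not_not.mpr rab) (not_not.mpr rax) (not_not.mpr rbx) (not_not.mpr ray)
        (not_not.mpr rby) hu0'
      have heq : ∑ v, bd (fun u w => ¬ r u w) v * rd (fun u w => ¬ r u w) v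
          = ∑ v, bd r v * rd r v := by
        apply Finset.sum_congr rfl
        intro v _
        rw [hrd' v, hbd' v, mul_comm]
      rwa [heq] at h
    · push_neg at hCex hDex
      have hsum : ∀ v, bd r v + rd r v + 1 = n := bd_add_rd r (by omega)
      have hmix : ∀ v : Fin n, n ≤ bd r v * rd r v + 2 := by
        intro v
        have h1 : 1 ≤ bd r v := Nat.one_le_iff_ne_zero.mpr (hDex v)
        have h2 : 1 ≤ rd r v := Nat.one_le_iff_ne_zero.mpr (hCex v)
        have h3 := prod_lb h1 h2
        have h4 := hsum v
        linarith
      have hbig : n * n ≤ (∑ v, bd r v * rd r v) + 2 * n := by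
        calc n * n = ∑ _v : Fin n, n := by
              rw [Finset.sum_const, Finset.card_univ, Fintype.card_fin, smul_eq_mul]
          _ ≤ ∑ v, (bd r v * rd r v + 2) := Finset.sum_le_sum (fun v _ => hmix v)
          _ = _ := by
              rw [Finset.sum_add_distrib, Finset.sum_const, Finset.card_univ,
                Fintype.card_fin, smul_eq_mul, mul_comm]
      obtain ⟨k, hk⟩ := Nat.le.dest hn
      have hnn : n * n = 36 + 12 * k + k * k := by rw [← hk]; ring
      have hkk : 0 ≤ k * k := Nat.zero_le _
      linarith

/-- A 3-set containing both an `r`-pair and a non-`r`-pair. -/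
private def bichrom (r : Fin n → Fin n → Prop) (T : Finset (Fin n)) : Prop :=
  T.card = 3 ∧ (∃ p ∈ T, ∃ q ∈ T, p ≠ q ∧ r p q) ∧ (∃ p ∈ T, ∃ q ∈ T, p ≠ q ∧ ¬ r p q)

private noncomputable def cset (r : Fin n → Fin n → Prop) :
    Finset ((_ : Fin n) × (Fin n × Fin n)) :=
  (univ : Finset (Fin n)).sigma (fun v => ((univ.erase v).filter (fun w => r v w)) ×ˢ
      ((univ.erase v).filter (fun w => ¬ r v w)))

private def tripleOf : ((_ : Fin n) × (Fin n × Fin n)) → Finset (Fin n) :=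
  fun p => {p.1, p.2.1, p.2.2}

private lemma mem_cset {r : Fin n → Fin n → Prop} (p : (_ : Fin n) × (Fin n × Fin n)) :
    p ∈ cset r ↔ (p.2.1 ≠ p.1 ∧ r p.1 p.2.1) ∧ (p.2.2 ≠ p.1 ∧ ¬ r p.1 p.2.2) := by
  unfold cset
  simp [Finset.mem_sigma, Finset.mem_product, Finset.mem_filter, Finset.mem_erase, and_assoc]

private lemma card_cset (r : Fin n → Fin n → Prop) :
    (cset r).card = ∑ v, bd r v * rd r v := by
  unfold cset
  rw [Finset.card_sigma]
  exact Finset.sum_congr rfl (fun v _ => by rw [Finset.card_product]; rfl)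

private lemma cherry {r : Fin n → Fin n → Prop} (hsymm : ∀ u v, r u v → r v u) :
    ∑ v, bd r v * rd r v ≤ 2 * (univ.filter (bichrom r)).card := by
  have hS : ∀ u v, r u v ↔ r v u := fun u v => ⟨hsymm u v, hsymm v u⟩
  have himg : (cset r).image tripleOf ⊆ univ.filter (bichrom r) := by
    intro T hT
    obtain ⟨p, hp, rfl⟩ := Finset.mem_image.mp hT
    obtain ⟨⟨h1, h2⟩, ⟨h3, h4⟩⟩ := (mem_cset p).mp hp
    have h5 : p.2.1 ≠ p.2.2 := fun h => h4 (h ▸ h2)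
    rw [Finset.mem_filter]
    refine ⟨Finset.mem_univ _, card_triple (Ne.symm h1) (Ne.symm h3) h5, ?_, ?_⟩
    · exact ⟨p.1, by simp [tripleOf], p.2.1, by simp [tripleOf], Ne.symm h1, h2⟩
    · exact ⟨p.1, by simp [tripleOf], p.2.2, by simp [tripleOf], Ne.symm h3, h4⟩
  have hfib : ∀ T ∈ (cset r).image tripleOf,
      ((cset r).filter (fun p => tripleOf p = T)).card ≤ 2 := by
    intro T hT
    have hT3 : T.card = 3 := ((Finset.mem_filter.mp (himg hT)).2).1
    obtain ⟨α, β, γ, hαβ, hαγ, hβγ, rfl⟩ := Finset.card_eq_three.mp hT3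
    -- find a vertex of T whose two incident pairs have the same color
    have hδ : ∃ δ ∈ ({α, β, γ} : Finset (Fin n)),
        ∀ s ∈ ({α, β, γ} : Finset (Fin n)), ∀ t ∈ ({α, β, γ} : Finset (Fin n)),
          s ≠ δ → t ≠ δ → r δ s → ¬ r δ t → False := by
      by_cases h1 : r α β ↔ r α γ
      · refine ⟨α, by simp, ?_⟩
        intro s hs t ht hsδ htδ hrs hrt
        simp only [Finset.mem_insert, Finset.mem_singleton] at hs ht
        rcases hs with rfl | rfl | rfl <;> rcases ht with rfl | rfl | rfl <;> tauto
      · by_cases h2 : r β α ↔ r β γ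
        · refine ⟨β, by simp, ?_⟩
          intro s hs t ht hsδ htδ hrs hrt
          simp only [Finset.mem_insert, Finset.mem_singleton] at hs ht
          have e6 := hS β α
          rcases hs with rfl | rfl | rfl <;> rcases ht with rfl | rfl | rfl <;> tauto
        · refine ⟨γ, by simp, ?_⟩
          intro s hs t ht hsδ htδ hrs hrt
          simp only [Finset.mem_insert, Finset.mem_singleton] at hs ht
          have e1 := hS α β
          have e2 := hS α γ
          have e3 := hS β γ
          have e4 := hS γ α
          have e5 := hS γ β
          have e6 := hS β α
          rcases hs with rfl | rfl | rfl <;> rcases ht with rfl | rfl | rfl <;> tauto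
    obtain ⟨δ, hδmem, hδgood⟩ := hδ
    have hsub : ((cset r).filter (fun p => tripleOf p = ({α, β, γ} : Finset (Fin n)))).card
        ≤ (({α, β, γ} : Finset (Fin n)).erase δ).card := by
      apply Finset.card_le_card_of_injOn (fun p => p.1)
      · intro p hp
        rw [Finset.mem_coe, Finset.mem_filter] at hp
        obtain ⟨hpΦ, hpg⟩ := hp
        obtain ⟨⟨h1, h2⟩, ⟨h3, h4⟩⟩ := (mem_cset p).mp hpΦ
        have hp1T : p.1 ∈ ({α, β, γ} : Finset (Fin n)) := by
          rw [← hpg]; simp [tripleOf]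
        have hp2T : p.2.1 ∈ ({α, β, γ} : Finset (Fin n)) := by
          rw [← hpg]; simp [tripleOf]
        have hp3T : p.2.2 ∈ ({α, β, γ} : Finset (Fin n)) := by
          rw [← hpg]; simp [tripleOf]
        rw [Finset.mem_coe, Finset.mem_erase]
        refine ⟨?_, hp1T⟩
        intro hp1δ
        exact hδgood p.2.1 hp2T p.2.2 hp3T (hp1δ ▸ h1) (hp1δ ▸ h3) (hp1δ ▸ h2) (hp1δ ▸ h4)
      · intro p hp q hq hpq
        simp only [Finset.coe_filter, Set.mem_setOf_eq] at hp hq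
        obtain ⟨hpΦ, hpg⟩ := hp
        obtain ⟨hqΦ, hqg⟩ := hq
        obtain ⟨⟨hp1, hp2⟩, ⟨hp3, hp4⟩⟩ := (mem_cset p).mp hpΦ
        obtain ⟨⟨hq1, hq2⟩, ⟨hq3, hq4⟩⟩ := (mem_cset q).mp hqΦ
        obtain ⟨pv, ps, pt⟩ := p
        obtain ⟨qv, qs, qt⟩ := q
        simp only at hpq
        subst hpq
        simp only at hp1 hp2 hp3 hp4 hq1 hq2 hq3 hq4
        have hqsT : qs ∈ ({pv, ps, pt} : Finset (Fin n)) := by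
          have : ({pv, ps, pt} : Finset (Fin n)) = tripleOf ⟨pv, (ps, pt)⟩ := rfl
          rw [this, hpg, ← hqg]
          simp [tripleOf]
        have hqtT : qt ∈ ({pv, ps, pt} : Finset (Fin n)) := by
          have : ({pv, ps, pt} : Finset (Fin n)) = tripleOf ⟨pv, (ps, pt)⟩ := rfl
          rw [this, hpg, ← hqg]
          simp [tripleOf]
        simp only [Finset.mem_insert, Finset.mem_singleton] at hqsT hqtT
        have hqs : qs = ps := by
          rcases hqsT with h | h | h
          · exact absurd h hq1
          · exact h
          · exact absurd (h ▸ hq2) hp4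
        have hqt : qt = pt := by
          rcases hqtT with h | h | h
          · exact absurd h hq3
          · exact absurd (h ▸ hp2) hq4
          · exact h
        rw [hqs, hqt]
    have herase : (({α, β, γ} : Finset (Fin n)).erase δ).card = 2 := by
      rw [Finset.card_erase_of_mem hδmem, hT3]
    omega
  have h1 := Finset.card_le_mul_card_image (f := tripleOf) (cset r) 2 hfib
  have h2 : ((cset r).image tripleOf).card ≤ (univ.filter (bichrom r)).card :=
    Finset.card_le_card himg
  rw [card_cset] at h1
  linarith

private lemma key (hn : 6 ≤ n) {r : Fin n → Fin n → Prop}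
    (hsymm : ∀ u v, r u v → r v u)
    {a b x y : Fin n}
    (hab : a ≠ b) (hax : a ≠ x) (hay : a ≠ y) (hbx : b ≠ x) (hby : b ≠ y) (hxy : x ≠ y)
    (rab : r a b) (rax : r a x) (rbx : r b x) (ray : r a y) (rby : r b y)
    {a' b' x' y' : Fin n}
    (hab' : a' ≠ b') (hax' : a' ≠ x') (hay' : a' ≠ y') (hbx' : b' ≠ x') (hby' : b' ≠ y')
    (hxy' : x' ≠ y')
    (nab : ¬ r a' b') (nax : ¬ r a' x') (nbx : ¬ r b' x') (nay : ¬ r a' y') (nby : ¬ r b' y') :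
    5 * n ≤ 18 + (univ.filter (bichrom r)).card := by
  have h1 := sum_ge hn hsymm hab hax hay hbx hby hxy rab rax rbx ray rby
    hab' hax' hay' hbx' hby' hxy' nab nax nbx nay nby
  have h2 := cherry hsymm
  linarith

private lemma pair_structure {n : ℕ} {T₁ T₂ : Finset (Fin n)} (h1 : T₁.card = 3)
    (h2 : T₂.card = 3) (hi : (T₁ ∩ T₂).card = 2) :
    ∃ a b x y : Fin n, a ≠ b ∧ a ≠ x ∧ a ≠ y ∧ b ≠ x ∧ b ≠ y ∧ x ≠ y ∧
      a ∈ T₁ ∧ a ∈ T₂ ∧ b ∈ T₁ ∧ b ∈ T₂ ∧ x ∈ T₁ ∧ y ∈ T₂ := by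
  obtain ⟨a, b, hab, hI⟩ := Finset.card_eq_two.mp hi
  have haT : a ∈ T₁ ∩ T₂ := by rw [hI]; simp
  have hbT : b ∈ T₁ ∩ T₂ := by rw [hI]; simp
  have hx1 : (T₁ \ (T₁ ∩ T₂)).card = 1 := by
    rw [Finset.card_sdiff_of_subset Finset.inter_subset_left, h1, hi]
  obtain ⟨x, hx⟩ := Finset.card_eq_one.mp hx1
  have hy1 : (T₂ \ (T₁ ∩ T₂)).card = 1 := by
    rw [Finset.card_sdiff_of_subset Finset.inter_subset_right, h2, hi]
  obtain ⟨y, hy⟩ := Finset.card_eq_one.mp hy1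
  have hxm : x ∈ T₁ \ (T₁ ∩ T₂) := by rw [hx]; simp
  have hym : y ∈ T₂ \ (T₁ ∩ T₂) := by rw [hy]; simp
  rw [Finset.mem_sdiff] at hxm hym
  have haT1 : a ∈ T₁ := (Finset.mem_inter.mp haT).1
  have haT2 : a ∈ T₂ := (Finset.mem_inter.mp haT).2
  have hbT1 : b ∈ T₁ := (Finset.mem_inter.mp hbT).1
  have hbT2 : b ∈ T₂ := (Finset.mem_inter.mp hbT).2
  refine ⟨a, b, x, y, hab, ?_, ?_, ?_, ?_, ?_, haT1, haT2, hbT1, hbT2, hxm.1, hym.1⟩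
  · exact fun h => hxm.2 (h ▸ haT)
  · exact fun h => hym.2 (h ▸ haT)
  · exact fun h => hxm.2 (h ▸ hbT)
  · exact fun h => hym.2 (h ▸ hbT)
  · exact fun h => hxm.2 (Finset.mem_inter.mpr ⟨hxm.1, h ▸ hym.1⟩)

private lemma johnson_adj_of_pair {n : ℕ} (z z' : JV n 3) (hne : z ≠ z') {p q : Fin n}
    (hpq : p ≠ q) (hp : p ∈ z.val) (hq : q ∈ z.val) (hp' : p ∈ z'.val) (hq' : q ∈ z'.val) :
    (johnsonGraph n 3).Adj z z' := by
  refine ⟨hne, ?_⟩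
  have hge : 2 ≤ (z.val ∩ z'.val).card := by
    have hsub : ({p, q} : Finset (Fin n)) ⊆ z.val ∩ z'.val := by
      intro t ht
      simp only [Finset.mem_insert, Finset.mem_singleton] at ht
      rcases ht with rfl | rfl <;> exact Finset.mem_inter.mpr ⟨by assumption, by assumption⟩
    calc 2 = ({p, q} : Finset (Fin n)).card := (Finset.card_pair hpq).symm
      _ ≤ _ := Finset.card_le_card hsub
  have hle : (z.val ∩ z'.val).card ≤ 2 := by
    by_contra hlt
    push_neg at hlt
    have h3 : 3 ≤ (z.val ∩ z'.val).card := hlt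
    have he : z.val ∩ z'.val = z.val :=
      Finset.eq_of_subset_of_card_le Finset.inter_subset_left (by rw [z.prop]; omega)
    have hss : z.val ⊆ z'.val := by
      rw [← he]; exact Finset.inter_subset_right
    have : z.val = z'.val :=
      Finset.eq_of_subset_of_card_le hss (by rw [z.prop, z'.prop])
    exact hne (Subtype.ext this)
  show (z.val ∩ z'.val).card = 3 - 1
  omega

lemma lower_bound {n : ℕ} (hn : 6 ≤ n) (S : Finset (JV n 3))
    (hS : IsSuperVertexCut (johnsonGraph n 3) ↑S) :
    5 * n ≤ 18 + S.card := by
  obtain ⟨hcut, hmin⟩ := hS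
  rw [IsVertexCut, SimpleGraph.Preconnected] at hcut
  push_neg at hcut
  obtain ⟨v₀, w₀, hnr⟩ := hcut
  set G' := (johnsonGraph n 3).induce ((↑S : Set (JV n 3))ᶜ) with hG'
  set inF : ↥((↑S : Set (JV n 3))ᶜ) → Prop := fun z => G'.Reachable v₀ z with hinF
  have hFv₀ : inF v₀ := SimpleGraph.Reachable.refl v₀
  have hclosedF : ∀ z w, inF z → G'.Adj z w → inF w :=
    fun z w hz h => hz.trans h.reachable
  have hclosedR : ∀ z w, ¬ inF z → G'.Adj z w → ¬ inF w :=
    fun z w hz h hw => hz (hw.trans h.symm.reachable)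
  have hGadj' : ∀ (z z' : ↥((↑S : Set (JV n 3))ᶜ)),
      (johnsonGraph n 3).Adj ↑z ↑z' → G'.Adj z z' := fun z z' h => h
  set red : Fin n → Fin n → Prop := fun p q => p ≠ q ∧
    ∃ z : ↥((↑S : Set (JV n 3))ᶜ), inF z ∧ p ∈ (z : JV n 3).val ∧ q ∈ (z : JV n 3).val
    with hred
  have hredsymm : ∀ u v, red u v → red v u := by
    rintro u v ⟨h1, z, h2, h3, h4⟩
    exact ⟨h1.symm, z, h2, h4, h3⟩
  have hdisj : ∀ p q, red p q → ∀ z' : ↥((↑S : Set (JV n 3))ᶜ), ¬ inF z' →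
      p ∈ (z' : JV n 3).val → q ∈ (z' : JV n 3).val → False := by
    rintro p q ⟨hpq, z, hzF, hpz, hqz⟩ z' hz'F hpz' hqz'
    have hne : (z : JV n 3) ≠ (z' : JV n 3) := by
      intro h
      have : z = z' := Subtype.ext h
      exact hz'F (this ▸ hzF)
    have hadj := johnson_adj_of_pair (z : JV n 3) (z' : JV n 3) hne hpq hpz hqz hpz' hqz'
    exact hz'F (hclosedF z z' hzF (hGadj' z z' hadj))
  -- red K4⁻ from an edge inside F
  obtain ⟨z₁, hz₁adj⟩ := hmin v₀
  have hz₁F : inF z₁ := hclosedF v₀ z₁ hFv₀ hz₁adj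
  have hGadj₁ : (johnsonGraph n 3).Adj ↑v₀ ↑z₁ := hz₁adj
  have hcard₁ : (((v₀ : JV n 3)).val ∩ ((z₁ : JV n 3)).val).card = 2 := by
    have := hGadj₁.2
    omega
  obtain ⟨a, b, x, y, hab, hax, hay, hbx, hby, hxy, haT1, haT2, hbT1, hbT2, hxT1, hyT2⟩ :=
    pair_structure ((v₀ : JV n 3)).prop ((z₁ : JV n 3)).prop hcard₁
  have rab : red a b := ⟨hab, v₀, hFv₀, haT1, hbT1⟩
  have rax : red a x := ⟨hax, v₀, hFv₀, haT1, hxT1⟩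
  have rbx : red b x := ⟨hbx, v₀, hFv₀, hbT1, hxT1⟩
  have ray : red a y := ⟨hay, z₁, hz₁F, haT2, hyT2⟩
  have rby : red b y := ⟨hby, z₁, hz₁F, hbT2, hyT2⟩
  -- blue K4⁻ from an edge inside R
  have hw₀R : ¬ inF w₀ := hnr
  obtain ⟨z₂, hz₂adj⟩ := hmin w₀
  have hz₂R : ¬ inF z₂ := hclosedR w₀ z₂ hw₀R hz₂adj
  have hGadj₂ : (johnsonGraph n 3).Adj ↑w₀ ↑z₂ := hz₂adj
  have hcard₂ : (((w₀ : JV n 3)).val ∩ ((z₂ : JV n 3)).val).card = 2 := by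
    have := hGadj₂.2
    omega
  obtain ⟨a', b', x', y', hab', hax', hay', hbx', hby', hxy', haT1', haT2', hbT1', hbT2',
    hxT1', hyT2'⟩ := pair_structure ((w₀ : JV n 3)).prop ((z₂ : JV n 3)).prop hcard₂
  have nab : ¬ red a' b' := fun h => hdisj a' b' h w₀ hw₀R haT1' hbT1'
  have nax : ¬ red a' x' := fun h => hdisj a' x' h w₀ hw₀R haT1' hxT1'
  have nbx : ¬ red b' x' := fun h => hdisj b' x' h w₀ hw₀R hbT1' hxT1'
  have nay : ¬ red a' y' := fun h => hdisj a' y' h z₂ hz₂R haT2' hyT2'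
  have nby : ¬ red b' y' := fun h => hdisj b' y' h z₂ hz₂R hbT2' hyT2'
  have hkey := key hn hredsymm hab hax hay hbx hby hxy rab rax rbx ray rby
    hab' hax' hay' hbx' hby' hxy' nab nax nbx nay nby
  -- every bichromatic triple is an element of S
  have hinj : (univ.filter (bichrom red)) ⊆ S.image (fun z : JV n 3 => z.val) := by
    intro T hT
    rw [Finset.mem_filter] at hT
    obtain ⟨-, hT3, ⟨p, hpT, q, hqT, hpq, hredpq⟩, ⟨p', hp'T, q', hq'T, hpq', hblue⟩⟩ := hT
    have hzTS : (⟨T, hT3⟩ : JV n 3) ∈ S := by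
      by_contra hzS
      have hzc : (⟨T, hT3⟩ : JV n 3) ∈ ((↑S : Set (JV n 3))ᶜ) := by
        simpa using hzS
      obtain ⟨hpq₀, z, hzF, hpz, hqz⟩ := hredpq
      by_cases hEq : (z : JV n 3) = ⟨T, hT3⟩
      · have hvEq : (z : JV n 3).val = T := congrArg Subtype.val hEq
        exact hblue ⟨hpq', z, hzF, hvEq ▸ hp'T, hvEq ▸ hq'T⟩
      · have hadj := johnson_adj_of_pair (z : JV n 3) (⟨T, hT3⟩ : JV n 3) hEq hpq₀
          hpz hqz hpT hqT
        have hz'F : inF ⟨⟨T, hT3⟩, hzc⟩ :=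
          hclosedF z ⟨⟨T, hT3⟩, hzc⟩ hzF (hGadj' z ⟨⟨T, hT3⟩, hzc⟩ hadj)
        exact hblue ⟨hpq', ⟨⟨T, hT3⟩, hzc⟩, hz'F, hp'T, hq'T⟩
    exact Finset.mem_image.mpr ⟨⟨T, hT3⟩, hzTS, rfl⟩
  have hle : (univ.filter (bichrom red)).card ≤ S.card :=
    le_trans (Finset.card_le_card hinj) Finset.card_image_le
  linarith

private lemma neighbor_decomp {n : ℕ} {v z : JV n 3} (hadj : (johnsonGraph n 3).Adj v z) :
    ∃ m t : Fin n, m ∈ v.val ∧ m ∉ z.val ∧ t ∈ z.val ∧ t ∉ v.val ∧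
      z.val = insert t (v.val.erase m) := by
  have hI : (v.val ∩ z.val).card = 2 := by
    have h := hadj.2
    omega
  have hm1 : (v.val \ (v.val ∩ z.val)).card = 1 := by
    rw [Finset.card_sdiff_of_subset Finset.inter_subset_left, v.prop, hI]
  obtain ⟨m, hm⟩ := Finset.card_eq_one.mp hm1
  have hmv : m ∈ v.val ∧ m ∉ v.val ∩ z.val := by
    have : m ∈ v.val \ (v.val ∩ z.val) := by rw [hm]; simp
    exact Finset.mem_sdiff.mp this
  have hmz : m ∉ z.val := fun h => hmv.2 (Finset.mem_inter.mpr ⟨hmv.1, h⟩)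
  have ht1 : (z.val \ (v.val ∩ z.val)).card = 1 := by
    rw [Finset.card_sdiff_of_subset Finset.inter_subset_right, z.prop, hI]
  obtain ⟨t, ht⟩ := Finset.card_eq_one.mp ht1
  have htz : t ∈ z.val ∧ t ∉ v.val ∩ z.val := by
    have : t ∈ z.val \ (v.val ∩ z.val) := by rw [ht]; simp
    exact Finset.mem_sdiff.mp this
  have htv : t ∉ v.val := fun h => htz.2 (Finset.mem_inter.mpr ⟨h, htz.1⟩)
  refine ⟨m, t, hmv.1, hmz, htz.1, htv, ?_⟩
  have hIeq : v.val.erase m = v.val ∩ z.val := by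
    have hsub : v.val ∩ z.val ⊆ v.val.erase m := by
      intro u hu
      rw [Finset.mem_erase]
      exact ⟨fun he => hmv.2 (he ▸ hu), (Finset.mem_inter.mp hu).1⟩
    exact (Finset.eq_of_subset_of_card_le hsub
      (by rw [Finset.card_erase_of_mem hmv.1, v.prop, hI])).symm
  rw [hIeq]
  have hsub2 : insert t (v.val ∩ z.val) ⊆ z.val := by
    intro u hu
    rcases Finset.mem_insert.mp hu with rfl | hu'
    · exact htz.1
    · exact (Finset.mem_inter.mp hu').2
  exact (Finset.eq_of_subset_of_card_le hsub2
    (by rw [Finset.card_insert_of_notMem htz.2, hI, z.prop])).symm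

lemma upper_bound {n : ℕ} (hn : 6 ≤ n) :
    ∃ S : Finset (JV n 3), IsSuperVertexCut (johnsonGraph n 3) ↑S ∧ S.card + 18 ≤ 5 * n := by
  have h0n : (0:ℕ) < n := by omega
  have h1n : (1:ℕ) < n := by omega
  have h2n : (2:ℕ) < n := by omega
  have h3n : (3:ℕ) < n := by omega
  have h4n : (4:ℕ) < n := by omega
  have h5n : (5:ℕ) < n := by omega
  set e0 : Fin n := ⟨0, h0n⟩ with he0
  set e1 : Fin n := ⟨1, h1n⟩ with he1
  set e2 : Fin n := ⟨2, h2n⟩ with he2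
  set e3 : Fin n := ⟨3, h3n⟩ with he3
  set e4 : Fin n := ⟨4, h4n⟩ with he4
  set e5 : Fin n := ⟨5, h5n⟩ with he5
  have hv0 : e0.val = 0 := rfl
  have hv1 : e1.val = 1 := rfl
  have hv2 : e2.val = 2 := rfl
  have hv3 : e3.val = 3 := rfl
  have hv4 : e4.val = 4 := rfl
  have hv5 : e5.val = 5 := rfl
  have hvne : ∀ u w : Fin n, u.val ≠ w.val → u ≠ w := fun u w h he => h (congrArg Fin.val he)
  have hvaleq : ∀ u w : Fin n, u.val = w.val → u = w := fun u w h => Fin.ext h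
  have h01 : e0 ≠ e1 := hvne _ _ (by omega)
  have h02 : e0 ≠ e2 := hvne _ _ (by omega)
  have h03 : e0 ≠ e3 := hvne _ _ (by omega)
  have h12 : e1 ≠ e2 := hvne _ _ (by omega)
  have h13 : e1 ≠ e3 := hvne _ _ (by omega)
  have h23 : e2 ≠ e3 := hvne _ _ (by omega)
  -- the two endpoints of the isolated edge
  set A : JV n 3 := ⟨{e0, e1, e2}, card_triple h01 h02 h12⟩ with hA
  set B : JV n 3 := ⟨{e0, e1, e3}, card_triple h01 h03 h13⟩ with hB
  have hAval : A.val = {e0, e1, e2} := rfl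
  have hBval : B.val = {e0, e1, e3} := rfl
  set W : Finset (Fin n) := univ.filter (fun w : Fin n => 4 ≤ w.val) with hW
  have hmemW : ∀ w : Fin n, w ∈ W ↔ 4 ≤ w.val := by
    intro w
    simp [hW]
  have hWcard : W.card + 4 = n := by
    have hcc := Finset.card_filter_add_card_filter_not
      (s := (univ : Finset (Fin n))) (fun w : Fin n => 4 ≤ w.val)
    have hsmall : (univ.filter (fun w : Fin n => ¬ 4 ≤ w.val)) = {e0, e1, e2, e3} := by
      ext u
      simp only [Finset.mem_filter, Finset.mem_univ, true_and, Finset.mem_insert,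
        Finset.mem_singleton, not_le]
      constructor
      · intro h
        have : u.val = 0 ∨ u.val = 1 ∨ u.val = 2 ∨ u.val = 3 := by omega
        rcases this with h' | h' | h' | h'
        · exact Or.inl (hvaleq _ _ (by rw [h', hv0]))
        · exact Or.inr (Or.inl (hvaleq _ _ (by rw [h', hv1])))
        · exact Or.inr (Or.inr (Or.inl (hvaleq _ _ (by rw [h', hv2]))))
        · exact Or.inr (Or.inr (Or.inr (hvaleq _ _ (by rw [h', hv3]))))
      · intro h
        rcases h with rfl | rfl | rfl | rfl <;> omega
    have h4c : ({e0, e1, e2, e3} : Finset (Fin n)).card = 4 := card_quad h01 h02 h03 h12 h13 h23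
    rw [hsmall, h4c] at hcc
    simpa using hcc
  set Xv : Finset (Fin n) := {e0, e2, e3} with hXv
  set Yv : Finset (Fin n) := {e1, e2, e3} with hYv
  obtain ⟨S0, hS0⟩ : ∃ s : Finset (Finset (Fin n)), s =
      (W.image (fun w => {e0, e1, w})) ∪ (W.image (fun w => {e0, e2, w})) ∪
      (W.image (fun w => {e1, e2, w})) ∪ (W.image (fun w => {e0, e3, w})) ∪
      (W.image (fun w => {e1, e3, w})) ∪ {Xv, Yv} := ⟨_, rfl⟩
  have hS0card : S0.card + 18 ≤ 5 * n := by
    have hle : S0.card ≤ W.card + W.card + W.card + W.card + W.card + 2 := by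
      rw [hS0]
      have i1 : Finset (Finset (Fin n)) := ∅
      set A1 := W.image (fun w : Fin n => ({e0, e1, w} : Finset (Fin n))) with hA1
      set A2 := W.image (fun w : Fin n => ({e0, e2, w} : Finset (Fin n))) with hA2
      set A3 := W.image (fun w : Fin n => ({e1, e2, w} : Finset (Fin n))) with hA3
      set A4 := W.image (fun w : Fin n => ({e0, e3, w} : Finset (Fin n))) with hA4
      set A5 := W.image (fun w : Fin n => ({e1, e3, w} : Finset (Fin n))) with hA5
      have hc0 := Finset.card_union_le (A1 ∪ A2 ∪ A3 ∪ A4 ∪ A5) ({Xv, Yv} : Finset (Finset (Fin n)))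
      have hc1 := Finset.card_union_le (A1 ∪ A2 ∪ A3 ∪ A4) A5
      have hc2 := Finset.card_union_le (A1 ∪ A2 ∪ A3) A4
      have hc3 := Finset.card_union_le (A1 ∪ A2) A3
      have hc4 := Finset.card_union_le A1 A2
      have hi1 : A1.card ≤ W.card := Finset.card_image_le
      have hi2 : A2.card ≤ W.card := Finset.card_image_le
      have hi3 : A3.card ≤ W.card := Finset.card_image_le
      have hi4 : A4.card ≤ W.card := Finset.card_image_le
      have hi5 : A5.card ≤ W.card := Finset.card_image_le
      have hxy : ({Xv, Yv} : Finset (Finset (Fin n))).card ≤ 2 :=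
        le_trans (Finset.card_insert_le _ _) (by simp)
      omega
    omega
  obtain ⟨S, hSdef⟩ : ∃ s : Finset (JV n 3), s = univ.filter (fun z : JV n 3 => z.val ∈ S0) :=
    ⟨_, rfl⟩
  have hmemS : ∀ z : JV n 3, z ∈ S ↔ z.val ∈ S0 := by
    intro z
    rw [hSdef]
    simp
  have hScard : S.card ≤ S0.card := by
    apply Finset.card_le_card_of_injOn (fun z => z.val)
    · intro z hz
      exact (hmemS z).mp hz
    · intro z _ z' _ h
      exact Subtype.ext h
  -- elements of S0 contain e0 or e1
  have hS0e01 : ∀ s ∈ S0, e0 ∈ s ∨ e1 ∈ s := by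
    intro s hs
    rw [hS0] at hs
    simp only [Finset.mem_union, Finset.mem_image, Finset.mem_insert,
      Finset.mem_singleton] at hs
    rcases hs with ((((⟨w, _, rfl⟩ | ⟨w, _, rfl⟩) | ⟨w, _, rfl⟩) | ⟨w, _, rfl⟩) | ⟨w, _, rfl⟩) |
      (rfl | rfl)
    · exact Or.inl (by simp)
    · exact Or.inl (by simp)
    · exact Or.inr (by simp)
    · exact Or.inl (by simp)
    · exact Or.inr (by simp)
    · exact Or.inl (by simp [hXv])
    · exact Or.inr (by simp [hYv])
  -- elements of S0 contain two distinct elements of value ≤ 3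
  have hS0two : ∀ s ∈ S0, ∃ u1 ∈ s, ∃ u2 ∈ s, u1 ≠ u2 ∧ u1.val ≤ 3 ∧ u2.val ≤ 3 := by
    intro s hs
    rw [hS0] at hs
    simp only [Finset.mem_union, Finset.mem_image, Finset.mem_insert,
      Finset.mem_singleton] at hs
    rcases hs with ((((⟨w, _, rfl⟩ | ⟨w, _, rfl⟩) | ⟨w, _, rfl⟩) | ⟨w, _, rfl⟩) | ⟨w, _, rfl⟩) |
      (rfl | rfl)
    · exact ⟨e0, by simp, e1, by simp, h01, by omega, by omega⟩
    · exact ⟨e0, by simp, e2, by simp, h02, by omega, by omega⟩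
    · exact ⟨e1, by simp, e2, by simp, h12, by omega, by omega⟩
    · exact ⟨e0, by simp, e3, by simp, h03, by omega, by omega⟩
    · exact ⟨e1, by simp, e3, by simp, h13, by omega, by omega⟩
    · exact ⟨e0, by simp [hXv], e2, by simp [hXv], h02, by omega, by omega⟩
    · exact ⟨e1, by simp [hYv], e2, by simp [hYv], h12, by omega, by omega⟩
  -- A and B are not in S0
  have hAnot : A.val ∉ S0 := by
    intro h
    rw [hS0] at h
    simp only [Finset.mem_union, Finset.mem_image, Finset.mem_insert,
      Finset.mem_singleton] at h
    rcases h with ((((⟨w, hw, hww⟩ | ⟨w, hw, hww⟩) | ⟨w, hw, hww⟩) | ⟨w, hw, hww⟩) |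
      ⟨w, hw, hww⟩) | (h | h)
    all_goals first
      | (have hwA : w ∈ ({e0, e1, e2} : Finset (Fin n)) := by rw [← hAval, ← hww]; simp
         simp only [Finset.mem_insert, Finset.mem_singleton] at hwA
         rw [hmemW] at hw
         rcases hwA with rfl | rfl | rfl <;> omega)
      | (have h3A : e3 ∈ ({e0, e1, e2} : Finset (Fin n)) := by
           simp only [← hAval, h, hXv, hYv]; simp
         simp only [Finset.mem_insert, Finset.mem_singleton] at h3A
         rcases h3A with h' | h' | h' <;> exact absurd (congrArg Fin.val h') (by omega))
  have hBnot : B.val ∉ S0 := by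
    intro h
    rw [hS0] at h
    simp only [Finset.mem_union, Finset.mem_image, Finset.mem_insert,
      Finset.mem_singleton] at h
    rcases h with ((((⟨w, hw, hww⟩ | ⟨w, hw, hww⟩) | ⟨w, hw, hww⟩) | ⟨w, hw, hww⟩) |
      ⟨w, hw, hww⟩) | (h | h)
    all_goals first
      | (have hwB : w ∈ ({e0, e1, e3} : Finset (Fin n)) := by rw [← hBval, ← hww]; simp
         simp only [Finset.mem_insert, Finset.mem_singleton] at hwB
         rw [hmemW] at hw
         rcases hwB with rfl | rfl | rfl <;> omega)
      | (have h2B : e2 ∈ ({e0, e1, e3} : Finset (Fin n)) := by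
           simp only [← hBval, h, hXv, hYv]; simp
         simp only [Finset.mem_insert, Finset.mem_singleton] at h2B
         rcases h2B with h' | h' | h' <;> exact absurd (congrArg Fin.val h') (by omega))
  have hAS : A ∉ S := fun h => hAnot ((hmemS A).mp h)
  have hBS : B ∉ S := fun h => hBnot ((hmemS B).mp h)
  have hABne : A ≠ B := by
    intro h
    have h2A : e2 ∈ A.val := by rw [hAval]; simp
    rw [h, hBval] at h2A
    simp only [Finset.mem_insert, Finset.mem_singleton] at h2A
    rcases h2A with h' | h' | h' <;> exact absurd (congrArg Fin.val h') (by omega)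
  have hABcap : A.val ∩ B.val = {e0, e1} := by
    rw [hAval, hBval]
    ext u
    simp only [Finset.mem_inter, Finset.mem_insert, Finset.mem_singleton]
    constructor
    · rintro ⟨h1, h2⟩
      rcases h1 with rfl | rfl | rfl
      · exact Or.inl rfl
      · exact Or.inr rfl
      · rcases h2 with h' | h' | h' <;> exact absurd (congrArg Fin.val h') (by omega)
    · rintro (rfl | rfl)
      · exact ⟨Or.inl rfl, Or.inl rfl⟩
      · exact ⟨Or.inr (Or.inl rfl), Or.inr (Or.inl rfl)⟩
  have hABadj : (johnsonGraph n 3).Adj A B := by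
    refine ⟨hABne, ?_⟩
    rw [hABcap, Finset.card_pair h01]
  -- coverage : a neighbor of A other than B lies in S0
  have hpairset : ∀ (c d t : Fin n), ({c, d, t} : Finset (Fin n)) = insert t {c, d} := by
    intro c d t
    ext u
    simp only [Finset.mem_insert, Finset.mem_singleton]
    tauto
  have covA : ∀ z : JV n 3, (johnsonGraph n 3).Adj A z → z ≠ B → z.val ∈ S0 := by
    intro z hadj hzB
    obtain ⟨m, t, hmv, hmz, htz, htv, hzval⟩ := neighbor_decomp hadj
    rw [hAval] at hmv htv hzval
    simp only [Finset.mem_insert, Finset.mem_singleton] at hmv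
    have htv0 : t ≠ e0 := fun h => htv (by rw [h]; simp)
    have htv1 : t ≠ e1 := fun h => htv (by rw [h]; simp)
    have htv2 : t ≠ e2 := fun h => htv (by rw [h]; simp)
    by_cases htb : 4 ≤ t.val
    · -- t is a large element : z.val belongs to one of the image families
      have htW : t ∈ W := (hmemW t).mpr htb
      rw [hS0]
      rcases hmv with rfl | rfl | rfl
      · -- missing e0 : pair {e1, e2}, family A3
        have herase : ({e0, e1, e2} : Finset (Fin n)).erase e0 = {e1, e2} := by
          ext u
          simp only [Finset.mem_erase, Finset.mem_insert, Finset.mem_singleton]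
          constructor
          · rintro ⟨hne, rfl | rfl | rfl⟩
            · exact absurd rfl hne
            · exact Or.inl rfl
            · exact Or.inr rfl
          · rintro (rfl | rfl)
            · exact ⟨h01.symm, Or.inr (Or.inl rfl)⟩
            · exact ⟨h02.symm, Or.inr (Or.inr rfl)⟩
        refine Finset.mem_union_left _ (Finset.mem_union_left _ (Finset.mem_union_left _
          (Finset.mem_union_right _ ?_)))
        exact Finset.mem_image.mpr ⟨t, htW, by rw [hzval, herase, hpairset]⟩
      · -- missing e1 : pair {e0, e2}, family A2
        have herase : ({e0, e1, e2} : Finset (Fin n)).erase e1 = {e0, e2} := by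
          ext u
          simp only [Finset.mem_erase, Finset.mem_insert, Finset.mem_singleton]
          constructor
          · rintro ⟨hne, rfl | rfl | rfl⟩
            · exact Or.inl rfl
            · exact absurd rfl hne
            · exact Or.inr rfl
          · rintro (rfl | rfl)
            · exact ⟨h01, Or.inl rfl⟩
            · exact ⟨h12.symm, Or.inr (Or.inr rfl)⟩
        refine Finset.mem_union_left _ (Finset.mem_union_left _ (Finset.mem_union_left _
          (Finset.mem_union_left _ (Finset.mem_union_right _ ?_))))
        exact Finset.mem_image.mpr ⟨t, htW, by rw [hzval, herase, hpairset]⟩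
      · -- missing e2 : pair {e0, e1}, family A1
        have herase : ({e0, e1, e2} : Finset (Fin n)).erase e2 = {e0, e1} := by
          ext u
          simp only [Finset.mem_erase, Finset.mem_insert, Finset.mem_singleton]
          constructor
          · rintro ⟨hne, rfl | rfl | rfl⟩
            · exact Or.inl rfl
            · exact Or.inr rfl
            · exact absurd rfl hne
          · rintro (rfl | rfl)
            · exact ⟨h02, Or.inl rfl⟩
            · exact ⟨h12, Or.inr (Or.inl rfl)⟩
        refine Finset.mem_union_left _ (Finset.mem_union_left _ (Finset.mem_union_left _
          (Finset.mem_union_left _ (Finset.mem_union_left _ ?_))))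
        exact Finset.mem_image.mpr ⟨t, htW, by rw [hzval, herase, hpairset]⟩
    · -- t is small, hence t = e3
      have ht3 : t = e3 := by
        apply hvaleq
        rw [hv3]
        have hne0 : t.val ≠ 0 := fun h => htv0 (hvaleq _ _ (by rw [h, hv0]))
        have hne1 : t.val ≠ 1 := fun h => htv1 (hvaleq _ _ (by rw [h, hv1]))
        have hne2 : t.val ≠ 2 := fun h => htv2 (hvaleq _ _ (by rw [h, hv2]))
        omega
      subst ht3
      rcases hmv with rfl | rfl | rfl
      · -- z.val = {e1, e2, e3} = Yv
        have herase : ({e0, e1, e2} : Finset (Fin n)).erase e0 = {e1, e2} := by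
          ext u
          simp only [Finset.mem_erase, Finset.mem_insert, Finset.mem_singleton]
          constructor
          · rintro ⟨hne, rfl | rfl | rfl⟩
            · exact absurd rfl hne
            · exact Or.inl rfl
            · exact Or.inr rfl
          · rintro (rfl | rfl)
            · exact ⟨h01.symm, Or.inr (Or.inl rfl)⟩
            · exact ⟨h02.symm, Or.inr (Or.inr rfl)⟩
        have hzY : z.val = Yv := by
          rw [hzval, herase, hYv]
          ext u
          simp only [Finset.mem_insert, Finset.mem_singleton]
          tauto
        rw [hS0, hzY]
        exact Finset.mem_union_right _ (by simp)
      · -- z.val = {e0, e2, e3} = Xv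
        have herase : ({e0, e1, e2} : Finset (Fin n)).erase e1 = {e0, e2} := by
          ext u
          simp only [Finset.mem_erase, Finset.mem_insert, Finset.mem_singleton]
          constructor
          · rintro ⟨hne, rfl | rfl | rfl⟩
            · exact Or.inl rfl
            · exact absurd rfl hne
            · exact Or.inr rfl
          · rintro (rfl | rfl)
            · exact ⟨h01, Or.inl rfl⟩
            · exact ⟨h12.symm, Or.inr (Or.inr rfl)⟩
        have hzX : z.val = Xv := by
          rw [hzval, herase, hXv]
          ext u
          simp only [Finset.mem_insert, Finset.mem_singleton]
          tauto
        rw [hS0, hzX]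
        exact Finset.mem_union_right _ (by simp)
      · -- z.val = {e0, e1, e3} = B.val : contradiction
        exfalso
        have herase : ({e0, e1, e2} : Finset (Fin n)).erase e2 = {e0, e1} := by
          ext u
          simp only [Finset.mem_erase, Finset.mem_insert, Finset.mem_singleton]
          constructor
          · rintro ⟨hne, rfl | rfl | rfl⟩
            · exact Or.inl rfl
            · exact Or.inr rfl
            · exact absurd rfl hne
          · rintro (rfl | rfl)
            · exact ⟨h02, Or.inl rfl⟩
            · exact ⟨h12, Or.inr (Or.inl rfl)⟩
        have hzB' : z.val = B.val := by
          rw [hzval, herase, hBval]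
          ext u
          simp only [Finset.mem_insert, Finset.mem_singleton]
          tauto
        exact hzB (Subtype.ext hzB')
  have covB : ∀ z : JV n 3, (johnsonGraph n 3).Adj B z → z ≠ A → z.val ∈ S0 := by
    intro z hadj hzA
    obtain ⟨m, t, hmv, hmz, htz, htv, hzval⟩ := neighbor_decomp hadj
    rw [hBval] at hmv htv hzval
    simp only [Finset.mem_insert, Finset.mem_singleton] at hmv
    have htv0 : t ≠ e0 := fun h => htv (by rw [h]; simp)
    have htv1 : t ≠ e1 := fun h => htv (by rw [h]; simp)
    have htv3 : t ≠ e3 := fun h => htv (by rw [h]; simp)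
    by_cases htb : 4 ≤ t.val
    · have htW : t ∈ W := (hmemW t).mpr htb
      rw [hS0]
      rcases hmv with rfl | rfl | rfl
      · -- missing e0 : pair {e1, e3}, family A5
        have herase : ({e0, e1, e3} : Finset (Fin n)).erase e0 = {e1, e3} := by
          ext u
          simp only [Finset.mem_erase, Finset.mem_insert, Finset.mem_singleton]
          constructor
          · rintro ⟨hne, rfl | rfl | rfl⟩
            · exact absurd rfl hne
            · exact Or.inl rfl
            · exact Or.inr rfl
          · rintro (rfl | rfl)
            · exact ⟨h01.symm, Or.inr (Or.inl rfl)⟩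
            · exact ⟨h03.symm, Or.inr (Or.inr rfl)⟩
        refine Finset.mem_union_left _ (Finset.mem_union_right _ ?_)
        exact Finset.mem_image.mpr ⟨t, htW, by rw [hzval, herase, hpairset]⟩
      · -- missing e1 : pair {e0, e3}, family A4
        have herase : ({e0, e1, e3} : Finset (Fin n)).erase e1 = {e0, e3} := by
          ext u
          simp only [Finset.mem_erase, Finset.mem_insert, Finset.mem_singleton]
          constructor
          · rintro ⟨hne, rfl | rfl | rfl⟩
            · exact Or.inl rfl
            · exact absurd rfl hne
            · exact Or.inr rfl
          · rintro (rfl | rfl)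
            · exact ⟨h01, Or.inl rfl⟩
            · exact ⟨h13.symm, Or.inr (Or.inr rfl)⟩
        refine Finset.mem_union_left _ (Finset.mem_union_left _ (Finset.mem_union_right _ ?_))
        exact Finset.mem_image.mpr ⟨t, htW, by rw [hzval, herase, hpairset]⟩
      · -- missing e3 : pair {e0, e1}, family A1
        have herase : ({e0, e1, e3} : Finset (Fin n)).erase e3 = {e0, e1} := by
          ext u
          simp only [Finset.mem_erase, Finset.mem_insert, Finset.mem_singleton]
          constructor
          · rintro ⟨hne, rfl | rfl | rfl⟩
            · exact Or.inl rfl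
            · exact Or.inr rfl
            · exact absurd rfl hne
          · rintro (rfl | rfl)
            · exact ⟨h03, Or.inl rfl⟩
            · exact ⟨h13, Or.inr (Or.inl rfl)⟩
        refine Finset.mem_union_left _ (Finset.mem_union_left _ (Finset.mem_union_left _
          (Finset.mem_union_left _ (Finset.mem_union_left _ ?_))))
        exact Finset.mem_image.mpr ⟨t, htW, by rw [hzval, herase, hpairset]⟩
    · -- t is small, hence t = e2
      have ht2 : t = e2 := by
        apply hvaleq
        rw [hv2]
        have hne0 : t.val ≠ 0 := fun h => htv0 (hvaleq _ _ (by rw [h, hv0]))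
        have hne1 : t.val ≠ 1 := fun h => htv1 (hvaleq _ _ (by rw [h, hv1]))
        have hne3 : t.val ≠ 3 := fun h => htv3 (hvaleq _ _ (by rw [h, hv3]))
        omega
      subst ht2
      rcases hmv with rfl | rfl | rfl
      · -- z.val = {e1, e3, e2} = Yv
        have herase : ({e0, e1, e3} : Finset (Fin n)).erase e0 = {e1, e3} := by
          ext u
          simp only [Finset.mem_erase, Finset.mem_insert, Finset.mem_singleton]
          constructor
          · rintro ⟨hne, rfl | rfl | rfl⟩
            · exact absurd rfl hne
            · exact Or.inl rfl
            · exact Or.inr rfl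
          · rintro (rfl | rfl)
            · exact ⟨h01.symm, Or.inr (Or.inl rfl)⟩
            · exact ⟨h03.symm, Or.inr (Or.inr rfl)⟩
        have hzY : z.val = Yv := by
          rw [hzval, herase, hYv]
          ext u
          simp only [Finset.mem_insert, Finset.mem_singleton]
          tauto
        rw [hS0, hzY]
        exact Finset.mem_union_right _ (by simp)
      · -- z.val = {e0, e3, e2} = Xv
        have herase : ({e0, e1, e3} : Finset (Fin n)).erase e1 = {e0, e3} := by
          ext u
          simp only [Finset.mem_erase, Finset.mem_insert, Finset.mem_singleton]
          constructor
          · rintro ⟨hne, rfl | rfl | rfl⟩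
            · exact Or.inl rfl
            · exact absurd rfl hne
            · exact Or.inr rfl
          · rintro (rfl | rfl)
            · exact ⟨h01, Or.inl rfl⟩
            · exact ⟨h13.symm, Or.inr (Or.inr rfl)⟩
        have hzX : z.val = Xv := by
          rw [hzval, herase, hXv]
          ext u
          simp only [Finset.mem_insert, Finset.mem_singleton]
          tauto
        rw [hS0, hzX]
        exact Finset.mem_union_right _ (by simp)
      · -- z.val = {e0, e1, e2} = A.val : contradiction
        exfalso
        have herase : ({e0, e1, e3} : Finset (Fin n)).erase e3 = {e0, e1} := by
          ext u
          simp only [Finset.mem_erase, Finset.mem_insert, Finset.mem_singleton]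
          constructor
          · rintro ⟨hne, rfl | rfl | rfl⟩
            · exact Or.inl rfl
            · exact Or.inr rfl
            · exact absurd rfl hne
          · rintro (rfl | rfl)
            · exact ⟨h03, Or.inl rfl⟩
            · exact ⟨h13, Or.inr (Or.inl rfl)⟩
        have hzA' : z.val = A.val := by
          rw [hzval, herase, hAval]
          ext u
          simp only [Finset.mem_insert, Finset.mem_singleton]
          tauto
        exact hzA (Subtype.ext hzA')
  have hcloseA : ∀ z : JV n 3, z ∉ S → (johnsonGraph n 3).Adj A z → z = B := by
    intro z hzS hadj
    by_contra hzB
    exact hzS ((hmemS z).mpr (covA z hadj hzB))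
  have hcloseB : ∀ z : JV n 3, z ∉ S → (johnsonGraph n 3).Adj B z → z = A := by
    intro z hzS hadj
    by_contra hzA
    exact hzS ((hmemS z).mpr (covB z hadj hzA))
  have hAc : A ∈ ((↑S : Set (JV n 3))ᶜ) := by simpa using hAS
  have hBc : B ∈ ((↑S : Set (JV n 3))ᶜ) := by simpa using hBS
  have h34 : e3 ≠ e4 := hvne _ _ (by omega)
  have h35 : e3 ≠ e5 := hvne _ _ (by omega)
  have h45 : e4 ≠ e5 := hvne _ _ (by omega)
  set W0 : JV n 3 := ⟨{e3, e4, e5}, card_triple h34 h35 h45⟩ with hW0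
  have hW0val : W0.val = {e3, e4, e5} := rfl
  have hW0S : W0 ∉ S := by
    intro h
    have h0 := hS0e01 _ ((hmemS W0).mp h)
    rw [hW0val] at h0
    rcases h0 with h0 | h0 <;>
      (simp only [Finset.mem_insert, Finset.mem_singleton] at h0;
       rcases h0 with h' | h' | h' <;> exact absurd (congrArg Fin.val h') (by omega))
  have hW0c : W0 ∈ ((↑S : Set (JV n 3))ᶜ) := by simpa using hW0S
  -- the deleted graph is disconnected
  have hvc : IsVertexCut (johnsonGraph n 3) ↑S := by
    intro hpre
    have hreach := hpre ⟨A, hAc⟩ ⟨W0, hW0c⟩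
    obtain ⟨p⟩ := hreach
    have hclosed : ∀ (u v : ↥((↑S : Set (JV n 3))ᶜ)),
        ((johnsonGraph n 3).induce ((↑S : Set (JV n 3))ᶜ)).Walk u v →
        ((u : JV n 3) = A ∨ (u : JV n 3) = B) →
        ((v : JV n 3) = A ∨ (v : JV n 3) = B) := by
      intro u v p
      induction p with
      | nil => exact id
      | @cons a c d h q ih =>
          intro hu
          apply ih
          have h' : (johnsonGraph n 3).Adj ↑a ↑c := h
          have hcS : (c : JV n 3) ∉ S := fun hc => c.2 hc
          rcases hu with ha | ha
          · rw [ha] at h'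
            exact Or.inr (hcloseA _ hcS h')
          · rw [ha] at h'
            exact Or.inl (hcloseB _ hcS h')
    have hW0AB := hclosed _ _ p (Or.inl rfl)
    have h4W : e4 ∈ W0.val := by rw [hW0val]; simp
    rcases hW0AB with h | h
    · rw [show ((⟨W0, hW0c⟩ : ↥((↑S : Set (JV n 3))ᶜ)) : JV n 3) = W0 from rfl] at h
      rw [h, hAval] at h4W
      simp only [Finset.mem_insert, Finset.mem_singleton] at h4W
      rcases h4W with h' | h' | h' <;> exact absurd (congrArg Fin.val h') (by omega)
    · rw [show ((⟨W0, hW0c⟩ : ↥((↑S : Set (JV n 3))ᶜ)) : JV n 3) = W0 from rfl] at h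
      rw [h, hBval] at h4W
      simp only [Finset.mem_insert, Finset.mem_singleton] at h4W
      rcases h4W with h' | h' | h' <;> exact absurd (congrArg Fin.val h') (by omega)
  -- minimum degree condition
  have hmindeg : ∀ v : ↥((↑S : Set (JV n 3))ᶜ), ∃ w : ↥((↑S : Set (JV n 3))ᶜ),
      ((johnsonGraph n 3).induce ((↑S : Set (JV n 3))ᶜ)).Adj v w := by
    intro v
    have hvS : (v : JV n 3) ∉ S := fun hc => v.2 hc
    by_cases hvA : (v : JV n 3) = A
    · refine ⟨⟨B, hBc⟩, ?_⟩
      show (johnsonGraph n 3).Adj ↑v B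
      rw [hvA]
      exact hABadj
    by_cases hvB : (v : JV n 3) = B
    · refine ⟨⟨A, hAc⟩, ?_⟩
      show (johnsonGraph n 3).Adj ↑v A
      rw [hvB]
      exact hABadj.symm
    have hnadjA : ¬ (johnsonGraph n 3).Adj A ↑v := fun h => hvB (hcloseA _ hvS h)
    have hnadjB : ¬ (johnsonGraph n 3).Adj B ↑v := fun h => hvA (hcloseB _ hvS h)
    have h1A : ((v : JV n 3).val ∩ A.val).card ≤ 1 := by
      by_contra hgt
      push_neg at hgt
      have hle3 : ((v : JV n 3).val ∩ A.val).card ≤ 3 := by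
        have := Finset.card_le_card
          (Finset.inter_subset_right : (v : JV n 3).val ∩ A.val ⊆ A.val)
        rw [hAval, card_triple h01 h02 h12] at this
        exact this
      by_cases hc2 : ((v : JV n 3).val ∩ A.val).card = 2
      · exact hnadjA ⟨fun h => hvA h.symm, by rw [Finset.inter_comm]; omega⟩
      · have hc3 : ((v : JV n 3).val ∩ A.val).card = 3 := by omega
        have he : (v : JV n 3).val ∩ A.val = (v : JV n 3).val :=
          Finset.eq_of_subset_of_card_le Finset.inter_subset_left
            (by rw [(v : JV n 3).prop]; omega)
        have hss : (v : JV n 3).val ⊆ A.val := by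
          rw [← he]; exact Finset.inter_subset_right
        have : (v : JV n 3).val = A.val := Finset.eq_of_subset_of_card_le hss
          (by rw [(v : JV n 3).prop, hAval, card_triple h01 h02 h12])
        exact hvA (Subtype.ext this)
    have h1B : ((v : JV n 3).val ∩ B.val).card ≤ 1 := by
      by_contra hgt
      push_neg at hgt
      have hle3 : ((v : JV n 3).val ∩ B.val).card ≤ 3 := by
        have := Finset.card_le_card
          (Finset.inter_subset_right : (v : JV n 3).val ∩ B.val ⊆ B.val)
        rw [hBval, card_triple h01 h03 h13] at this
        exact this
      by_cases hc2 : ((v : JV n 3).val ∩ B.val).card = 2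
      · exact hnadjB ⟨fun h => hvB h.symm, by rw [Finset.inter_comm]; omega⟩
      · have hc3 : ((v : JV n 3).val ∩ B.val).card = 3 := by omega
        have he : (v : JV n 3).val ∩ B.val = (v : JV n 3).val :=
          Finset.eq_of_subset_of_card_le Finset.inter_subset_left
            (by rw [(v : JV n 3).prop]; omega)
        have hss : (v : JV n 3).val ⊆ B.val := by
          rw [← he]; exact Finset.inter_subset_right
        have : (v : JV n 3).val = B.val := Finset.eq_of_subset_of_card_le hss
          (by rw [(v : JV n 3).prop, hBval, card_triple h01 h03 h13])
        exact hvB (Subtype.ext this)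
    have hpairA : ∀ u1 u2 : Fin n, u1 ≠ u2 → u1 ∈ (v : JV n 3).val → u2 ∈ (v : JV n 3).val →
        u1 ∈ A.val → u2 ∈ A.val → False := by
      intro u1 u2 h12' hz1 hz2 hA1 hA2
      have hsub : ({u1, u2} : Finset (Fin n)) ⊆ (v : JV n 3).val ∩ A.val := by
        intro u hu
        rcases Finset.mem_insert.mp hu with rfl | hu'
        · exact Finset.mem_inter.mpr ⟨hz1, hA1⟩
        · rw [Finset.mem_singleton] at hu'
          subst hu'
          exact Finset.mem_inter.mpr ⟨hz2, hA2⟩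
      have := Finset.card_le_card hsub
      rw [Finset.card_pair h12'] at this
      omega
    have hpairB : ∀ u1 u2 : Fin n, u1 ≠ u2 → u1 ∈ (v : JV n 3).val → u2 ∈ (v : JV n 3).val →
        u1 ∈ B.val → u2 ∈ B.val → False := by
      intro u1 u2 h12' hz1 hz2 hB1 hB2
      have hsub : ({u1, u2} : Finset (Fin n)) ⊆ (v : JV n 3).val ∩ B.val := by
        intro u hu
        rcases Finset.mem_insert.mp hu with rfl | hu'
        · exact Finset.mem_inter.mpr ⟨hz1, hB1⟩
        · rw [Finset.mem_singleton] at hu'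
          subst hu'
          exact Finset.mem_inter.mpr ⟨hz2, hB2⟩
      have := Finset.card_le_card hsub
      rw [Finset.card_pair h12'] at this
      omega
    by_cases hcase : e2 ∈ (v : JV n 3).val ∧ e3 ∈ (v : JV n 3).val
    · -- v ⊇ {e2, e3} : swap the third (large) element
      obtain ⟨hm2, hm3⟩ := hcase
      have h2A : e2 ∈ A.val := by rw [hAval]; simp
      have h3B : e3 ∈ B.val := by rw [hBval]; simp
      have h0not : e0 ∉ (v : JV n 3).val := fun h =>
        hpairA e0 e2 h02 h hm2 (by rw [hAval]; simp) h2A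
      have h1not : e1 ∉ (v : JV n 3).val := fun h =>
        hpairA e1 e2 h12 h hm2 (by rw [hAval]; simp) h2A
      have hsub23 : ({e2, e3} : Finset (Fin n)) ⊆ (v : JV n 3).val := by
        intro u hu
        rcases Finset.mem_insert.mp hu with rfl | hu'
        · exact hm2
        · rw [Finset.mem_singleton] at hu'
          subst hu'
          exact hm3
      have hr1 : (((v : JV n 3).val \ {e2, e3}).card) = 1 := by
        rw [Finset.card_sdiff_of_subset hsub23, (v : JV n 3).prop, Finset.card_pair h23]
      obtain ⟨rr, hrr⟩ := Finset.card_eq_one.mp hr1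
      have hrm : rr ∈ (v : JV n 3).val ∧ rr ∉ ({e2, e3} : Finset (Fin n)) := by
        have : rr ∈ (v : JV n 3).val \ {e2, e3} := by rw [hrr]; simp
        exact Finset.mem_sdiff.mp this
      have hre2 : rr ≠ e2 := fun h => hrm.2 (by rw [h]; simp)
      have hre3 : rr ≠ e3 := fun h => hrm.2 (by rw [h]; simp)
      have hre0 : rr ≠ e0 := fun h => h0not (h ▸ hrm.1)
      have hre1 : rr ≠ e1 := fun h => h1not (h ▸ hrm.1)
      have hrval : 4 ≤ rr.val := by
        have k0 : rr.val ≠ 0 := fun h => hre0 (hvaleq _ _ (by rw [h, hv0]))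
        have k1 : rr.val ≠ 1 := fun h => hre1 (hvaleq _ _ (by rw [h, hv1]))
        have k2 : rr.val ≠ 2 := fun h => hre2 (hvaleq _ _ (by rw [h, hv2]))
        have k3 : rr.val ≠ 3 := fun h => hre3 (hvaleq _ _ (by rw [h, hv3]))
        omega
      have hvval : (v : JV n 3).val = {e2, e3, rr} := by
        refine (Finset.eq_of_subset_of_card_le ?_ ?_).symm
        · intro u hu
          rcases Finset.mem_insert.mp hu with rfl | hu'
          · exact hm2
          · rcases Finset.mem_insert.mp hu' with rfl | hu''
            · exact hm3
            · rw [Finset.mem_singleton] at hu''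
              subst hu''
              exact hrm.1
        · rw [card_triple h23 hre2.symm hre3.symm, (v : JV n 3).prop]
      have hWr : 1 ≤ (W \ {rr}).card := by
        have h1 := Finset.le_card_sdiff ({rr} : Finset (Fin n)) W
        have h2 : ({rr} : Finset (Fin n)).card = 1 := Finset.card_singleton rr
        omega
      obtain ⟨r', hr'⟩ := Finset.card_pos.mp (by omega : 0 < (W \ {rr}).card)
      rw [Finset.mem_sdiff, Finset.mem_singleton] at hr'
      have hr'val : 4 ≤ r'.val := (hmemW r').mp hr'.1
      have hr'rr : r' ≠ rr := hr'.2
      have hwcard : ({e2, e3, r'} : Finset (Fin n)).card = 3 :=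
        card_triple h23 (hvne _ _ (by omega)) (hvne _ _ (by omega))
      have hwS0 : ({e2, e3, r'} : Finset (Fin n)) ∉ S0 := by
        intro h
        rcases hS0e01 _ h with h' | h' <;>
          (simp only [Finset.mem_insert, Finset.mem_singleton] at h';
           rcases h' with h'' | h'' | h'' <;> exact absurd (congrArg Fin.val h'') (by omega))
      have hwS : (⟨{e2, e3, r'}, hwcard⟩ : JV n 3) ∉ S := fun h => hwS0 ((hmemS _).mp h)
      have hwc : (⟨{e2, e3, r'}, hwcard⟩ : JV n 3) ∈ ((↑S : Set (JV n 3))ᶜ) := by simpa using hwS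
      refine ⟨⟨⟨{e2, e3, r'}, hwcard⟩, hwc⟩, ?_⟩
      show (johnsonGraph n 3).Adj ↑v ⟨{e2, e3, r'}, hwcard⟩
      refine ⟨?_, ?_⟩
      · intro h
        have : rr ∈ ({e2, e3, r'} : Finset (Fin n)) := by
          rw [← show ((⟨{e2, e3, r'}, hwcard⟩ : JV n 3)).val = {e2, e3, r'} from rfl,
            ← congrArg Subtype.val h]
          exact hrm.1
        simp only [Finset.mem_insert, Finset.mem_singleton] at this
        rcases this with h' | h' | h'
        · exact hre2 h'
        · exact hre3 h'
        · exact hr'rr h'.symm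
      · have hcap : (v : JV n 3).val ∩ ({e2, e3, r'} : Finset (Fin n)) = {e2, e3} := by
          rw [hvval]
          ext u
          simp only [Finset.mem_inter, Finset.mem_insert, Finset.mem_singleton]
          constructor
          · rintro ⟨h1, h2⟩
            rcases h1 with rfl | rfl | rfl
            · exact Or.inl rfl
            · exact Or.inr rfl
            · rcases h2 with h' | h' | h'
              · exact absurd (congrArg Fin.val h') (by omega)
              · exact absurd (congrArg Fin.val h') (by omega)
              · exact absurd h' (fun he => hr'rr he.symm)
          · rintro (rfl | rfl)
            · exact ⟨Or.inl rfl, Or.inl rfl⟩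
            · exact ⟨Or.inr (Or.inl rfl), Or.inr (Or.inl rfl)⟩
        show ((v : JV n 3).val ∩ ({e2, e3, r'} : Finset (Fin n))).card = 3 - 1
        rw [hcap, Finset.card_pair h23]
    · -- v has at most one element among {e0, e1, e2, e3}
      have hD1 : ((v : JV n 3).val ∩ ({e0, e1, e2, e3} : Finset (Fin n))).card ≤ 1 := by
        by_contra hgt
        push_neg at hgt
        obtain ⟨u1, hu1, u2, hu2, h12'⟩ := Finset.one_lt_card.mp hgt
        rw [Finset.mem_inter] at hu1 hu2
        obtain ⟨hu1v, hu1D⟩ := hu1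
        obtain ⟨hu2v, hu2D⟩ := hu2
        simp only [Finset.mem_insert, Finset.mem_singleton] at hu1D hu2D
        have hA0 : e0 ∈ A.val := by rw [hAval]; simp
        have hA1' : e1 ∈ A.val := by rw [hAval]; simp
        have hA2 : e2 ∈ A.val := by rw [hAval]; simp
        have hB0 : e0 ∈ B.val := by rw [hBval]; simp
        have hB1' : e1 ∈ B.val := by rw [hBval]; simp
        have hB3 : e3 ∈ B.val := by rw [hBval]; simp
        rcases hu1D with rfl | rfl | rfl | rfl <;> rcases hu2D with rfl | rfl | rfl | rfl <;>
          first
            | exact h12' rfl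
            | exact hpairA _ _ h12' hu1v hu2v (by assumption) (by assumption)
            | exact hpairB _ _ h12' hu1v hu2v (by assumption) (by assumption)
            | exact hcase ⟨hu1v, hu2v⟩
            | exact hcase ⟨hu2v, hu1v⟩
      have hbig : 2 ≤ (((v : JV n 3).val \ ({e0, e1, e2, e3} : Finset (Fin n))).card) := by
        have hci := Finset.card_inter_add_card_sdiff (v : JV n 3).val
          ({e0, e1, e2, e3} : Finset (Fin n))
        rw [(v : JV n 3).prop] at hci
        omega
      obtain ⟨p, hp, q, hq, hpq⟩ := Finset.one_lt_card.mp hbig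
      rw [Finset.mem_sdiff] at hp hq
      obtain ⟨hpv, hpD⟩ := hp
      obtain ⟨hqv, hqD⟩ := hq
      simp only [Finset.mem_insert, Finset.mem_singleton, not_or] at hpD hqD
      have hpval : 4 ≤ p.val := by
        have k0 : p.val ≠ 0 := fun h => hpD.1 (hvaleq _ _ (by rw [h, hv0]))
        have k1 : p.val ≠ 1 := fun h => hpD.2.1 (hvaleq _ _ (by rw [h, hv1]))
        have k2 : p.val ≠ 2 := fun h => hpD.2.2.1 (hvaleq _ _ (by rw [h, hv2]))
        have k3 : p.val ≠ 3 := fun h => hpD.2.2.2 (hvaleq _ _ (by rw [h, hv3]))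
        omega
      have hqval : 4 ≤ q.val := by
        have k0 : q.val ≠ 0 := fun h => hqD.1 (hvaleq _ _ (by rw [h, hv0]))
        have k1 : q.val ≠ 1 := fun h => hqD.2.1 (hvaleq _ _ (by rw [h, hv1]))
        have k2 : q.val ≠ 2 := fun h => hqD.2.2.1 (hvaleq _ _ (by rw [h, hv2]))
        have k3 : q.val ≠ 3 := fun h => hqD.2.2.2 (hvaleq _ _ (by rw [h, hv3]))
        omega
      -- choose d' ∈ {e0, e1} not in v
      have hd' : ∃ d' : Fin n, d' ∉ (v : JV n 3).val ∧ d'.val ≤ 3 := by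
        by_cases h0v : e0 ∈ (v : JV n 3).val
        · refine ⟨e1, ?_, by omega⟩
          intro h1v
          exact hpairA e0 e1 h01 h0v h1v (by rw [hAval]; simp) (by rw [hAval]; simp)
        · exact ⟨e0, h0v, by omega⟩
      obtain ⟨d', hd'v, hd'val⟩ := hd'
      -- the third element of v
      have hsubpq : ({p, q} : Finset (Fin n)) ⊆ (v : JV n 3).val := by
        intro u hu
        rcases Finset.mem_insert.mp hu with rfl | hu'
        · exact hpv
        · rw [Finset.mem_singleton] at hu'
          subst hu'
          exact hqv
      have hs1 : (((v : JV n 3).val \ {p, q}).card) = 1 := by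
        rw [Finset.card_sdiff_of_subset hsubpq, (v : JV n 3).prop, Finset.card_pair hpq]
      obtain ⟨sE, hsE⟩ := Finset.card_eq_one.mp hs1
      have hsm : sE ∈ (v : JV n 3).val ∧ sE ∉ ({p, q} : Finset (Fin n)) := by
        have : sE ∈ (v : JV n 3).val \ {p, q} := by rw [hsE]; simp
        exact Finset.mem_sdiff.mp this
      have hsp : sE ≠ p := fun h => hsm.2 (by rw [h]; simp)
      have hsq : sE ≠ q := fun h => hsm.2 (by rw [h]; simp)
      have hsd' : sE ≠ d' := fun h => hd'v (h ▸ hsm.1)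
      have hvval : (v : JV n 3).val = {sE, p, q} := by
        refine (Finset.eq_of_subset_of_card_le ?_ ?_).symm
        · intro u hu
          rcases Finset.mem_insert.mp hu with rfl | hu'
          · exact hsm.1
          · rcases Finset.mem_insert.mp hu' with rfl | hu''
            · exact hpv
            · rw [Finset.mem_singleton] at hu''
              subst hu''
              exact hqv
        · rw [card_triple hsp hsq hpq, (v : JV n 3).prop]
      have hpd' : p ≠ d' := hvne _ _ (by omega)
      have hqd' : q ≠ d' := hvne _ _ (by omega)
      have hwcard : ({d', p, q} : Finset (Fin n)).card = 3 :=
        card_triple hpd'.symm hqd'.symm hpq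
      have hwS0 : ({d', p, q} : Finset (Fin n)) ∉ S0 := by
        intro h
        obtain ⟨u1, hu1, u2, hu2, h12', hval1, hval2⟩ := hS0two _ h
        simp only [Finset.mem_insert, Finset.mem_singleton] at hu1 hu2
        have hu1d : u1 = d' := by
          rcases hu1 with rfl | rfl | rfl
          · rfl
          · omega
          · omega
        have hu2d : u2 = d' := by
          rcases hu2 with rfl | rfl | rfl
          · rfl
          · omega
          · omega
        exact h12' (hu1d.trans hu2d.symm)
      have hwS : (⟨{d', p, q}, hwcard⟩ : JV n 3) ∉ S := fun h => hwS0 ((hmemS _).mp h)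
      have hwc : (⟨{d', p, q}, hwcard⟩ : JV n 3) ∈ ((↑S : Set (JV n 3))ᶜ) := by simpa using hwS
      refine ⟨⟨⟨{d', p, q}, hwcard⟩, hwc⟩, ?_⟩
      show (johnsonGraph n 3).Adj ↑v ⟨{d', p, q}, hwcard⟩
      refine ⟨?_, ?_⟩
      · intro h
        have : sE ∈ ({d', p, q} : Finset (Fin n)) := by
          rw [← show ((⟨{d', p, q}, hwcard⟩ : JV n 3)).val = {d', p, q} from rfl,
            ← congrArg Subtype.val h]
          exact hsm.1
        simp only [Finset.mem_insert, Finset.mem_singleton] at this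
        rcases this with h' | h' | h'
        · exact hsd' h'
        · exact hsp h'
        · exact hsq h'
      · have hcap : (v : JV n 3).val ∩ ({d', p, q} : Finset (Fin n)) = {p, q} := by
          rw [hvval]
          ext u
          simp only [Finset.mem_inter, Finset.mem_insert, Finset.mem_singleton]
          constructor
          · rintro ⟨h1, h2⟩
            rcases h1 with rfl | rfl | rfl
            · rcases h2 with h' | h' | h'
              · exact absurd h' hsd'
              · exact absurd h' hsp
              · exact absurd h' hsq
            · exact Or.inl rfl
            · exact Or.inr rfl
          · rintro (rfl | rfl)
            · exact ⟨Or.inr (Or.inl rfl), Or.inr (Or.inl rfl)⟩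
            · exact ⟨Or.inr (Or.inr rfl), Or.inr (Or.inr rfl)⟩
        show ((v : JV n 3).val ∩ ({d', p, q} : Finset (Fin n))).card = 3 - 1
        rw [hcap, Finset.card_pair hpq]
  exact ⟨S, ⟨hvc, hmindeg⟩, by omega⟩

end JS



/-- For `n ≥ 6`, the super-connectivity of `J(n,3)` equals `5n - 18`. -/
theorem superConnectivity_johnson_three (n : ℕ) (hn : 6 ≤ n) :
    superConnectivity (johnsonGraph n 3) = ((5 * n - 18 : ℕ) : ℕ∞) := by
  obtain ⟨S, hScut, hScard⟩ := JS.upper_bound hn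
  have hlow := JS.lower_bound hn S hScut
  have hcard : S.card = 5 * n - 18 := by omega
  rw [superConnectivity]
  apply le_antisymm
  · exact sInf_le ⟨S, hScut, by rw [hcard]⟩
  · apply le_sInf
    rintro m ⟨T, hTcut, rfl⟩
    have hT := JS.lower_bound hn T hTcut
    exact_mod_cast (by omega : 5 * n - 18 ≤ T.card)
end

section
/- For n ∈ {3, 4, 5}, the Johnson graph J(n,2) has no super vertex-cut; that is, κ'(J(n,2)) = +∞. -/
open SimpleGraph Finset

instance johnsonAdjDec (n k : ℕ) : DecidableRel (johnsonGraph n k).Adj :=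
  fun u v => inferInstanceAs (Decidable (u ≠ v ∧ (u.val ∩ v.val).card = k - 1))

lemma johnson_cross (n : ℕ) (hn : n = 3 ∨ n = 4 ∨ n = 5) :
    ∀ a b c d : JV n 2, (johnsonGraph n 2).Adj a b → (johnsonGraph n 2).Adj c d →
    a = c ∨ a = d ∨ b = c ∨ b = d ∨ (johnsonGraph n 2).Adj a c ∨ (johnsonGraph n 2).Adj a d ∨
    (johnsonGraph n 2).Adj b c ∨ (johnsonGraph n 2).Adj b d := by
  rcases hn with rfl | rfl | rfl <;> decide

/-- For `n ∈ {3,4,5}`, the Johnson graph `J(n,2)` has no super vertex-cut, so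
its super-connectivity is `+∞`. -/
theorem superConnectivity_johnson_two_small (n : ℕ) (hn : n = 3 ∨ n = 4 ∨ n = 5) :
    (∀ S : Set (JV n 2), ¬ IsSuperVertexCut (johnsonGraph n 2) S) ∧
    superConnectivity (johnsonGraph n 2) = ⊤ := by
  have key : ∀ S : Set (JV n 2), ¬ IsSuperVertexCut (johnsonGraph n 2) S := by
    rintro S ⟨hcut, hiso⟩
    apply hcut
    intro u v
    obtain ⟨u', hu'⟩ := hiso u
    obtain ⟨v', hv'⟩ := hiso v
    have hu2 : (johnsonGraph n 2).Adj u.val u'.val := hu'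
    have hv2 : (johnsonGraph n 2).Adj v.val v'.val := hv'
    rcases johnson_cross n hn _ _ _ _ hu2 hv2 with h|h|h|h|h|h|h|h
    · rw [Subtype.ext h]
    · have : u = v' := Subtype.ext h
      subst this
      exact hv'.symm.reachable
    · have : u' = v := Subtype.ext h
      subst this
      exact hu'.reachable
    · have : u' = v' := Subtype.ext h
      subst this
      exact hu'.reachable.trans hv'.symm.reachable
    · have h' : ((johnsonGraph n 2).induce Sᶜ).Adj u v := h
      exact h'.reachable
    · have h' : ((johnsonGraph n 2).induce Sᶜ).Adj u v' := h
      exact h'.reachable.trans hv'.symm.reachable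
    · have h' : ((johnsonGraph n 2).induce Sᶜ).Adj u' v := h
      exact hu'.reachable.trans h'.reachable
    · have h' : ((johnsonGraph n 2).induce Sᶜ).Adj u' v' := h
      exact (hu'.reachable.trans h'.reachable).trans hv'.symm.reachable
  refine ⟨key, ?_⟩
  rw [superConnectivity, sInf_eq_top]
  rintro m ⟨S, hS, -⟩
  exact (key _ hS).elim
end

section
/- Let G be a finite connected graph and let S be a minimum super vertex-cut of G. If a vertex v ∈ S has a neighbour in some connected component of G−S, then v has at least one neighbour in every connected component of G−S. In particular, S contains a vertex having at least one neighbour in every component of G−S. -/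
open SimpleGraph Finset

/-- If `S` is a minimum super vertex-cut of a finite connected graph `G` and
`v ∈ S` has a neighbour in some component of `G - S`, then `v` has a neighbour
in every component of `G - S`. In particular, `S` contains a vertex with a
neighbour in every component of `G - S`. -/
theorem minSuperVertexCut_neighbor_every_component {V : Type*} [Fintype V]
    (G : SimpleGraph V) (hG : G.Connected)
    (S : Finset V) (hS : IsMinSuperVertexCut G S) :
    (∀ v ∈ S, (∃ w : ↥((↑S : Set V)ᶜ), G.Adj v ↑w) →
      ∀ C : (G.induce ((↑S : Set V)ᶜ)).ConnectedComponent,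
        ∃ w : ↥((↑S : Set V)ᶜ),
          (G.induce ((↑S : Set V)ᶜ)).connectedComponentMk w = C ∧ G.Adj v ↑w) ∧
    (∃ v ∈ S, ∀ C : (G.induce ((↑S : Set V)ᶜ)).ConnectedComponent,
      ∃ w : ↥((↑S : Set V)ᶜ),
        (G.induce ((↑S : Set V)ᶜ)).connectedComponentMk w = C ∧ G.Adj v ↑w) := by
  classical
  obtain ⟨⟨hcut, hiso⟩, hmin⟩ := hS
  have main : ∀ v ∈ S, (∃ w : ↥((↑S : Set V)ᶜ), G.Adj v ↑w) →
      ∀ C : (G.induce ((↑S : Set V)ᶜ)).ConnectedComponent,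
        ∃ w : ↥((↑S : Set V)ᶜ),
          (G.induce ((↑S : Set V)ᶜ)).connectedComponentMk w = C ∧ G.Adj v ↑w := by
    intro v hv hw0 C
    obtain ⟨w0, hw0⟩ := hw0
    by_contra hC
    push_neg at hC
    -- hC : ∀ w, comp w = C → ¬ G.Adj v ↑w
    have hvT : v ∉ S.erase v := Finset.notMem_erase v S
    have hTsub : ((↑S : Set V)ᶜ) ⊆ ((↑(S.erase v) : Set V)ᶜ) := by
      intro x hx
      simp only [Set.mem_compl_iff, Finset.coe_erase, Set.mem_diff] at hx ⊢
      intro h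
      exact hx h.1
    -- invariant: walks in induce (erase v S)ᶜ starting in C stay in C
    have key : ∀ {x y : ↥((↑(S.erase v) : Set V)ᶜ)}
        (p : (G.induce ((↑(S.erase v) : Set V)ᶜ)).Walk x y),
        ∀ (hx : (x : V) ∈ ((↑S : Set V)ᶜ)),
        (G.induce ((↑S : Set V)ᶜ)).connectedComponentMk ⟨x, hx⟩ = C →
        ∃ hy : (y : V) ∈ ((↑S : Set V)ᶜ),
          (G.induce ((↑S : Set V)ᶜ)).connectedComponentMk ⟨y, hy⟩ = C := by
      intro x y p
      induction p with
      | nil => intro hx hxC; exact ⟨hx, hxC⟩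
      | @cons a b c h q ih =>
        intro hx hxC
        have hb : (b : V) ∈ ((↑S : Set V)ᶜ) := by
          by_contra hbS
          have hbS' : (b : V) ∈ S := by
            simpa using hbS
          have hbv : (b : V) = v := by
            have := b.2
            simp only [Set.mem_compl_iff, Finset.mem_coe, Finset.mem_erase] at this
            by_contra hne
            exact this ⟨hne, hbS'⟩
          have hadj : G.Adj v ↑a := by
            have hab : G.Adj ↑a ↑b := h
            rw [hbv] at hab
            exact hab.symm
          exact hC ⟨a, hx⟩ hxC hadj
        have hab : (G.induce ((↑S : Set V)ᶜ)).Adj ⟨a, hx⟩ ⟨b, hb⟩ := h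
        have hbC : (G.induce ((↑S : Set V)ᶜ)).connectedComponentMk ⟨b, hb⟩ = C := by
          rw [← hxC]
          exact SimpleGraph.ConnectedComponent.sound hab.reachable.symm
        exact ih hb hbC
    -- T := S.erase v is a super vertex cut
    have hT : IsSuperVertexCut G ↑(S.erase v) := by
      constructor
      · intro hpre
        obtain ⟨x0, hx0⟩ := C.exists_rep
        have hvT' : v ∈ ((↑(S.erase v) : Set V)ᶜ) := by
          simpa using hvT
        obtain ⟨p⟩ := hpre ⟨↑x0, hTsub x0.2⟩ ⟨v, hvT'⟩
        obtain ⟨hy, -⟩ := key p x0.2 (by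
          exact hx0)
        exact hy (by simpa using hv)
      · intro u
        by_cases huv : (u : V) = v
        · refine ⟨⟨↑w0, hTsub w0.2⟩, ?_⟩
          show G.Adj ↑u ↑w0
          rw [huv]; exact hw0
        · have hu : (u : V) ∈ ((↑S : Set V)ᶜ) := by
            have := u.2
            simp only [Set.mem_compl_iff, Finset.mem_coe, Finset.mem_erase] at this ⊢
            intro hS'
            exact this ⟨huv, hS'⟩
          obtain ⟨w, hw⟩ := hiso ⟨↑u, hu⟩
          exact ⟨⟨↑w, hTsub w.2⟩, hw⟩
    have := hmin _ hT
    have hlt : (S.erase v).card < S.card := Finset.card_erase_lt_of_mem hv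
    omega
  refine ⟨main, ?_⟩
  -- find v ∈ S with a neighbour in Sᶜ
  obtain ⟨a, b, hab⟩ : ∃ a b : ↥((↑S : Set V)ᶜ),
      ¬ (G.induce ((↑S : Set V)ᶜ)).Reachable a b := by
    by_contra h
    push_neg at h
    exact hcut fun a b => h a b
  have lem : ∀ {a' b' : V} (p : G.Walk a' b') (ha : a' ∈ ((↑S : Set V)ᶜ)),
      (∃ hb : b' ∈ ((↑S : Set V)ᶜ),
        (G.induce ((↑S : Set V)ᶜ)).Reachable ⟨a', ha⟩ ⟨b', hb⟩) ∨
      (∃ v ∈ S, ∃ w : ↥((↑S : Set V)ᶜ), G.Adj v ↑w) := by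
    intro a' b' p
    induction p with
    | nil => intro ha; exact Or.inl ⟨ha, SimpleGraph.Reachable.refl _⟩
    | @cons x c y h q ih =>
      intro ha
      by_cases hc : c ∈ ((↑S : Set V)ᶜ)
      · rcases ih hc with ⟨hb, hr⟩ | hr
        · left
          refine ⟨hb, SimpleGraph.Reachable.trans ?_ hr⟩
          exact SimpleGraph.Adj.reachable (by exact h :
            (G.induce ((↑S : Set V)ᶜ)).Adj ⟨x, ha⟩ ⟨c, hc⟩)
        · right; exact hr
      · right
        have hcS : c ∈ S := by simpa using hc
        exact ⟨c, hcS, ⟨x, ha⟩, h.symm⟩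
  obtain ⟨p⟩ := hG.preconnected ↑a ↑b
  rcases lem p a.2 with ⟨hb, hr⟩ | ⟨v, hv, hwv⟩
  · exact absurd (by convert hr using 2 <;> exact Subtype.ext rfl) hab
  · exact ⟨v, hv, main v hv hwv⟩
end

section
/- Let n ≥ 6 and let T be any 3-element subset of [n]. Then the set S of all 2-subsets of [n] that intersect T in exactly one element is a super vertex-cut of the Johnson graph J(n,2) of cardinality 3(n−3); that is, |S| = 3(n−3), deleting S disconnects J(n,2), and J(n,2)−S has no isolated vertex. -/
open SimpleGraph Finset

lemma pair_inter_pair {n : ℕ} (a b c : Fin n) (hcb : c ≠ b) (hca : c ≠ a) :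
    ({a, b} : Finset (Fin n)) ∩ {a, c} = {a} := by
  ext x
  simp only [mem_inter, mem_insert, mem_singleton]
  constructor
  · rintro ⟨h1, rfl | rfl⟩
    · rfl
    · rcases h1 with h | h
      · exact h
      · exact absurd h hcb
  · rintro rfl; exact ⟨Or.inl rfl, Or.inl rfl⟩

/-- For `n ≥ 6` and any 3-subset `T` of `[n]`, the set of 2-subsets meeting `T`
in exactly one element is a super vertex-cut of `J(n,2)` of size `3(n-3)`. -/
theorem johnson_two_explicit_superVertexCut (n : ℕ) (hn : 6 ≤ n)
    (T : Finset (Fin n)) (hT : T.card = 3) :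
    (Finset.univ.filter (fun v : JV n 2 => (v.val ∩ T).card = 1)).card = 3 * (n - 3) ∧
    IsSuperVertexCut (johnsonGraph n 2)
      ↑(Finset.univ.filter (fun v : JV n 2 => (v.val ∩ T).card = 1)) := by
  set S := Finset.univ.filter (fun v : JV n 2 => (v.val ∩ T).card = 1) with hSdef
  have hmemS : ∀ v : JV n 2, v ∈ S ↔ (v.val ∩ T).card = 1 := by
    intro v; simp [hSdef]
  have hmemSc : ∀ v : JV n 2, (v ∈ (↑S : Set (JV n 2))ᶜ) ↔ (v.val ∩ T).card ≠ 1 := by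
    intro v; simp [hSdef]
  -- case split helper: for v in Sᶜ, inter card is 0 or 2
  have hcases : ∀ v : JV n 2, (v.val ∩ T).card ≠ 1 → (v.val ∩ T).card = 0 ∨ (v.val ∩ T).card = 2 := by
    intro v hv
    have h2 : (v.val ∩ T).card ≤ 2 := by
      calc (v.val ∩ T).card ≤ v.val.card := card_le_card inter_subset_left
        _ = 2 := v.2
    omega
  refine ⟨?_, ?_, ?_⟩
  · -- cardinality
    have key : (T ×ˢ Tᶜ).card = S.card := by
      apply Finset.card_bij (fun p hp => (⟨{p.1, p.2}, by
        rw [mem_product, mem_compl] at hp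
        exact card_pair (fun h => hp.2 (h ▸ hp.1))⟩ : JV n 2))
      · -- maps into S
        rintro ⟨a, b⟩ hp
        rw [mem_product] at hp
        obtain ⟨ha, hb⟩ := hp
        rw [mem_compl] at hb
        rw [hmemS]
        have : ({a, b} : Finset (Fin n)) ∩ T = {a} := by
          ext x
          simp only [mem_inter, mem_insert, mem_singleton]
          constructor
          · rintro ⟨rfl | rfl, hx⟩
            · rfl
            · exact absurd hx hb
          · rintro rfl; exact ⟨Or.inl rfl, ha⟩
        simp [this]
      · -- injective
        rintro ⟨a, b⟩ hp ⟨a', b'⟩ hp' heq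
        rw [mem_product, mem_compl] at hp hp'
        have hset : ({a, b} : Finset (Fin n)) = {a', b'} := congrArg Subtype.val heq
        have ha' : a' = a := by
          have : a' ∈ ({a, b} : Finset (Fin n)) := by rw [hset]; exact mem_insert_self _ _
          rcases mem_insert.mp this with h | h
          · exact h
          · rw [mem_singleton] at h
            subst h
            exact absurd hp'.1 hp.2
        have hb' : b' = b := by
          have : b' ∈ ({a, b} : Finset (Fin n)) := by
            rw [hset]; exact mem_insert_of_mem (mem_singleton_self _)
          rcases mem_insert.mp this with h | h
          · subst h
            exact absurd hp.1 hp'.2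
          · exact mem_singleton.mp h
        simp [ha', hb']
      · -- surjective
        intro v hv
        rw [hmemS] at hv
        obtain ⟨a, ha⟩ := card_eq_one.mp hv
        have hav : a ∈ v.val := mem_inter.mp (ha ▸ mem_singleton_self a) |>.1
        have haT : a ∈ T := mem_inter.mp (ha ▸ mem_singleton_self a) |>.2
        have hcard : (v.val.erase a).card = 1 := by
          rw [card_erase_of_mem hav, v.2]
        obtain ⟨b, hb⟩ := card_eq_one.mp hcard
        have hbv : b ∈ v.val := (erase_subset a v.val) (hb ▸ mem_singleton_self b)
        have hba : b ≠ a := (mem_erase.mp (hb ▸ mem_singleton_self b)).1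
        have hbT : b ∉ T := by
          intro hbT
          have : b ∈ v.val ∩ T := mem_inter.mpr ⟨hbv, hbT⟩
          rw [ha, mem_singleton] at this
          exact hba this
        refine ⟨(a, b), mem_product.mpr ⟨haT, mem_compl.mpr hbT⟩, ?_⟩
        apply Subtype.ext
        show ({a, b} : Finset (Fin n)) = v.val
        rw [← insert_erase hav, hb]
    rw [← key, card_product, hT, card_compl, Fintype.card_fin, hT]
  · -- vertex cut
    intro hpre
    obtain ⟨u0, hu0T, hu0c⟩ := Finset.exists_subset_card_eq (show 2 ≤ T.card by omega)
    have hTc : (Tᶜ : Finset (Fin n)).card = n - 3 := by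
      rw [card_compl, Fintype.card_fin, hT]
    obtain ⟨v0, hv0T, hv0c⟩ := Finset.exists_subset_card_eq (show 2 ≤ (Tᶜ : Finset (Fin n)).card by omega)
    have hu0m : (⟨u0, hu0c⟩ : JV n 2) ∈ (↑S : Set (JV n 2))ᶜ := by
      rw [hmemSc]
      have h1 : u0 ∩ T = u0 := inter_eq_left.mpr hu0T
      simp [h1, hu0c]
    have hv0m : (⟨v0, hv0c⟩ : JV n 2) ∈ (↑S : Set (JV n 2))ᶜ := by
      rw [hmemSc]
      have h1 : v0 ∩ T = ∅ := by
        rw [← disjoint_iff_inter_eq_empty]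
        exact disjoint_left.mpr (fun x hx => mem_compl.mp (hv0T hx))
      simp [h1]
    have hreach := hpre ⟨_, hu0m⟩ ⟨_, hv0m⟩
    have inv : ∀ x y : ↥((↑S : Set (JV n 2))ᶜ),
        ((johnsonGraph n 2).induce ((↑S : Set (JV n 2))ᶜ)).Reachable x y →
        x.val.val ⊆ T → y.val.val ⊆ T := by
      intro x y hr
      obtain ⟨p⟩ := hr
      induction p with
      | nil => exact fun h => h
      | @cons x z y h p ih =>
        intro hx
        apply ih
        have h' : (johnsonGraph n 2).Adj x.val z.val := h
        have hsub : x.val.val ∩ z.val.val ⊆ z.val.val ∩ T := fun t ht =>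
          mem_inter.mpr ⟨(mem_inter.mp ht).2, hx (mem_inter.mp ht).1⟩
        have hle := card_le_card hsub
        rw [h'.2] at hle
        have hz := hcases z.val ((hmemSc z.val).mp z.2)
        have hzcard : (z.val.val ∩ T).card = 2 := by omega
        have heq : z.val.val ∩ T = z.val.val :=
          eq_of_subset_of_card_le inter_subset_left (by rw [hzcard, z.val.2])
        exact inter_eq_left.mp heq
    have hres := inv _ _ hreach hu0T
    obtain ⟨x, hx⟩ := card_pos.mp (by rw [hv0c]; omega : 0 < v0.card)
    exact (mem_compl.mp (hv0T hx)) (hres hx)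
  · -- no isolated vertices
    intro v
    have hv := (hmemSc v.val).mp v.2
    obtain ⟨a, b, hab, hvab⟩ := card_eq_two.mp v.val.2
    rcases hcases v.val hv with h0 | h2
    · -- v disjoint from T
      have hdisj : v.val.val ∩ T = ∅ := card_eq_zero.mp h0
      have hnotT : ∀ x ∈ v.val.val, x ∉ T := by
        intro x hx hxT
        have : x ∈ v.val.val ∩ T := mem_inter.mpr ⟨hx, hxT⟩
        rw [hdisj] at this
        exact notMem_empty x this
      have hlt : (T ∪ v.val.val).card < n := by
        calc (T ∪ v.val.val).card ≤ T.card + v.val.val.card := card_union_le _ _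
          _ = 5 := by rw [hT, v.val.2]
          _ < n := by omega
      obtain ⟨c, hc⟩ : ∃ c, c ∉ T ∪ v.val.val := by
        by_contra hcon
        push_neg at hcon
        rw [eq_univ_iff_forall.mpr hcon, card_univ, Fintype.card_fin] at hlt
        omega
      rw [mem_union] at hc
      push_neg at hc
      have hca : c ≠ a := fun h => hc.2 (h ▸ (hvab ▸ mem_insert_self a {b}))
      have hcb : c ≠ b := fun h => hc.2 (h ▸ (hvab ▸ mem_insert_of_mem (mem_singleton_self b)))
      have hw2 : ({a, c} : Finset (Fin n)).card = 2 := card_pair (fun h => hca h.symm)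
      have hwm : (⟨{a, c}, hw2⟩ : JV n 2) ∈ (↑S : Set (JV n 2))ᶜ := by
        rw [hmemSc]
        have haT : a ∉ T := hnotT a (hvab ▸ mem_insert_self a {b})
        have : ({a, c} : Finset (Fin n)) ∩ T = ∅ := by
          rw [← disjoint_iff_inter_eq_empty]
          apply Finset.disjoint_left.mpr
          intro x hx
          rcases mem_insert.mp hx with rfl | hx
          · exact haT
          · rw [mem_singleton] at hx; exact hx ▸ hc.1
        simp [this]
      refine ⟨⟨_, hwm⟩, ?_, ?_⟩
      · intro heq
        have : v.val.val = {a, c} := by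
          simp only [Function.Embedding.coe_subtype] at heq
          exact congrArg Subtype.val heq
        rw [this] at hc
        exact hc.2 (mem_insert_of_mem (mem_singleton_self c))
      · show (v.val.val ∩ ({a, c} : Finset (Fin n))).card = 2 - 1
        rw [hvab, pair_inter_pair a b c hcb hca, card_singleton]
    · -- v inside T
      have hvT : v.val.val ⊆ T := by
        have heq : v.val.val ∩ T = v.val.val :=
          eq_of_subset_of_card_le inter_subset_left (by rw [h2, v.val.2])
        exact inter_eq_left.mp heq
      have hsd : (T \ v.val.val).card = 1 := by
        rw [card_sdiff_of_subset hvT, hT, v.val.2]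
      obtain ⟨c, hc⟩ := card_pos.mp (by omega : 0 < (T \ v.val.val).card)
      rw [mem_sdiff] at hc
      have hca : c ≠ a := fun h => hc.2 (h ▸ (hvab ▸ mem_insert_self a {b}))
      have hcb : c ≠ b := fun h => hc.2 (h ▸ (hvab ▸ mem_insert_of_mem (mem_singleton_self b)))
      have hw2 : ({a, c} : Finset (Fin n)).card = 2 := card_pair (fun h => hca h.symm)
      have hwm : (⟨{a, c}, hw2⟩ : JV n 2) ∈ (↑S : Set (JV n 2))ᶜ := by
        rw [hmemSc]
        have haT : a ∈ T := hvT (hvab ▸ mem_insert_self a {b})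
        have : ({a, c} : Finset (Fin n)) ∩ T = {a, c} := by
          apply inter_eq_left.mpr
          intro x hx
          rcases mem_insert.mp hx with rfl | hx
          · exact haT
          · rw [mem_singleton] at hx; exact hx ▸ hc.1
        rw [this, hw2]
        omega
      refine ⟨⟨_, hwm⟩, ?_, ?_⟩
      · intro heq
        have : v.val.val = {a, c} := by
          simp only [Function.Embedding.coe_subtype] at heq
          exact congrArg Subtype.val heq
        rw [this] at hc
        exact hc.2 (mem_insert_of_mem (mem_singleton_self c))
      · show (v.val.val ∩ ({a, c} : Finset (Fin n))).card = 2 - 1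
        rw [hvab, pair_inter_pair a b c hcb hca, card_singleton]
end

section
/- Let k ≥ 3 and n ≥ k+3 be integers, and let x and y be adjacent vertices of the Johnson graph J(n,k). Then the set S = (N(x) ∪ N(y)) − {x, y} of all neighbours of x or y other than x and y themselves has cardinality (2k−1)(n−k)−k, deleting S disconnects J(n,k), and J(n,k)−S has no isolated vertex (so S is a super vertex-cut). -/
open SimpleGraph Finset

/- ### Auxiliary lemmas -/

lemma min'_eq_of_sing {α} [LinearOrder α] {s : Finset α} {a : α} (h : s = {a}) :
    ∀ hne, s.min' hne = a := by
  subst h; intro hne; simp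

lemma eq_sing {α} [LinearOrder α] {s : Finset α} (h : s.card = 1) :
    ∀ hne, s = {s.min' hne} := by
  obtain ⟨a, rfl⟩ := Finset.card_eq_one.mp h
  intro hne; simp

lemma sdiff_card_one {n k : ℕ} (hk : 1 ≤ k) {v x : Finset (Fin n)}
    (hv : v.card = k) (hx : x.card = k) (h : (v ∩ x).card = k - 1) :
    (x \ v).card = 1 ∧ (v \ x).card = 1 := by
  have h1 := card_sdiff_add_card_inter x v
  have h2 := card_sdiff_add_card_inter v x
  rw [inter_comm] at h1
  omega

/- swap lemmas -/
section Swap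
variable {n : ℕ} {v x : Finset (Fin n)} {u e : Fin n}

lemma swap_card (hu : u ∈ v) (he : e ∉ v) :
    (insert e (v.erase u)).card = v.card := by
  rw [card_insert_of_notMem (fun h => he (mem_of_mem_erase h)),
    card_erase_of_mem hu]
  have := card_pos.mpr ⟨u, hu⟩
  omega

lemma swap_inter_self (hu : u ∈ v) (he : e ∉ v) :
    (insert e (v.erase u) ∩ v).card = v.card - 1 := by
  rw [insert_inter_of_notMem he, inter_eq_left.mpr (erase_subset _ _),
    card_erase_of_mem hu]

lemma swap_ne (he : e ∉ v) : insert e (v.erase u) ≠ v :=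
  fun h => he (h ▸ mem_insert_self e _)

lemma swap_inter_le_succ : (insert e (v.erase u) ∩ x).card ≤ (v ∩ x).card + 1 := by
  have hsub : insert e (v.erase u) ∩ x ⊆ insert e (v ∩ x) := by
    intro c hc
    obtain ⟨hc1, hc2⟩ := mem_inter.mp hc
    rcases mem_insert.mp hc1 with rfl | hc1
    · exact mem_insert_self _ _
    · exact mem_insert_of_mem (mem_inter.mpr ⟨mem_of_mem_erase hc1, hc2⟩)
  exact le_trans (card_le_card hsub) (card_insert_le _ _)

lemma swap_inter_le_of_not_mem (he : e ∉ x) :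
    (insert e (v.erase u) ∩ x).card ≤ (v ∩ x).card := by
  apply card_le_card
  intro c hc
  obtain ⟨hc1, hc2⟩ := mem_inter.mp hc
  rcases mem_insert.mp hc1 with rfl | hc1
  · exact absurd hc2 he
  · exact mem_inter.mpr ⟨mem_of_mem_erase hc1, hc2⟩

lemma swap_inter_le_of_mem (hu : u ∈ v) (hux : u ∈ x) :
    (insert e (v.erase u) ∩ x).card ≤ (v ∩ x).card := by
  have hsub : insert e (v.erase u) ∩ x ⊆ insert e ((v ∩ x).erase u) := by
    intro c hc
    obtain ⟨hc1, hc2⟩ := mem_inter.mp hc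
    rcases mem_insert.mp hc1 with rfl | hc1
    · exact mem_insert_self _ _
    · exact mem_insert_of_mem (mem_erase.mpr
        ⟨(mem_erase.mp hc1).1, mem_inter.mpr ⟨mem_of_mem_erase hc1, hc2⟩⟩)
  refine le_trans (card_le_card hsub) (le_trans (card_insert_le _ _) ?_)
  rw [card_erase_of_mem (mem_inter.mpr ⟨hu, hux⟩)]
  have : 0 < (v ∩ x).card := card_pos.mpr ⟨u, mem_inter.mpr ⟨hu, hux⟩⟩
  omega

end Swap

lemma card_filter_adj {n k : ℕ} (hk : 1 ≤ k) (x : Finset (Fin n)) (hx : x.card = k) :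
    (univ.filter (fun v : JV n k => (v.1 ∩ x).card = k - 1)).card = k * (n - k) := by
  have hkn : k ≤ n := by simpa [hx] using card_le_card (subset_univ x)
  have htc : (x ×ˢ (univ \ x)).card = k * (n - k) := by
    rw [card_product, card_sdiff_of_subset (subset_univ x), card_univ, Fintype.card_fin, hx]
  rw [← htc]
  refine card_bij' (i := fun (v : JV n k) hv =>
      ((x \ v.1).min' (card_pos.mp (by
        have := (sdiff_card_one hk v.2 hx (by simpa using (mem_filter.mp hv).2)).1; omega)),
       (v.1 \ x).min' (card_pos.mp (by
        have := (sdiff_card_one hk v.2 hx (by simpa using (mem_filter.mp hv).2)).2; omega))))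
    (j := fun p hp => (⟨insert p.2 (x.erase p.1), by
        have hp' := mem_product.mp hp
        rw [card_insert_of_notMem (fun hc => (mem_sdiff.mp hp'.2).2 (mem_of_mem_erase hc)),
          card_erase_of_mem hp'.1, hx]
        omega⟩ : JV n k)) ?_ ?_ ?_ ?_
  · -- hi
    intro v hv
    have hadj : (v.1 ∩ x).card = k - 1 := by simpa using (mem_filter.mp hv).2
    have h1 := (sdiff_card_one hk v.2 hx hadj).1
    have h2 := (sdiff_card_one hk v.2 hx hadj).2
    have hu := min'_mem (x \ v.1) (card_pos.mp (by omega))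
    have hw := min'_mem (v.1 \ x) (card_pos.mp (by omega))
    simp only [mem_product, mem_sdiff, mem_univ, true_and]
    exact ⟨(mem_sdiff.mp hu).1, (mem_sdiff.mp hw).2⟩
  · -- hj
    intro p hp
    have hp' := mem_product.mp hp
    have h2 : p.2 ∉ x := (mem_sdiff.mp hp'.2).2
    simp only [mem_filter, mem_univ, true_and]
    have : insert p.2 (x.erase p.1) ∩ x = x.erase p.1 := by
      rw [insert_inter_of_notMem h2, inter_eq_left]
      exact erase_subset _ _
    show (insert p.2 (x.erase p.1) ∩ x).card = k - 1
    rw [this, card_erase_of_mem hp'.1, hx]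
  · -- left inverse
    intro v hv
    have hadj : (v.1 ∩ x).card = k - 1 := by simpa using (mem_filter.mp hv).2
    have h1 := (sdiff_card_one hk v.2 hx hadj).1
    have h2 := (sdiff_card_one hk v.2 hx hadj).2
    set u := (x \ v.1).min' (card_pos.mp (by omega)) with hu
    set w := (v.1 \ x).min' (card_pos.mp (by omega)) with hw
    have hxu : x \ v.1 = {u} := eq_sing h1 _
    have hvw : v.1 \ x = {w} := eq_sing h2 _
    apply Subtype.ext
    show insert w (x.erase u) = v.1
    have hxe : x.erase u = v.1 ∩ x := by
      rw [← sdiff_singleton_eq_erase, ← hxu, sdiff_sdiff_self_left, inter_comm]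
    rw [hxe, insert_eq, ← hvw, sdiff_union_inter]
  · -- right inverse
    intro p hp
    have hp' := mem_product.mp hp
    have h1 : p.1 ∈ x := hp'.1
    have h2 : p.2 ∉ x := (mem_sdiff.mp hp'.2).2
    have hxd : x \ insert p.2 (x.erase p.1) = {p.1} := by
      ext c
      simp only [mem_sdiff, mem_insert, mem_erase, mem_singleton]
      constructor
      · rintro ⟨hc, hc2⟩
        by_contra hne2
        exact hc2 (Or.inr ⟨hne2, hc⟩)
      · rintro rfl
        refine ⟨h1, ?_⟩
        push_neg
        exact ⟨fun h => h2 (h ▸ h1), fun h _ => (h rfl).elim⟩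
    have hvd : insert p.2 (x.erase p.1) \ x = {p.2} := by
      ext c
      simp only [mem_sdiff, mem_insert, mem_erase, mem_singleton]
      constructor
      · rintro ⟨hc, hc2⟩
        rcases hc with rfl | ⟨_, hc⟩
        · rfl
        · exact absurd hc hc2
      · rintro rfl
        exact ⟨Or.inl rfl, h2⟩
    have e1 := min'_mem (x \ insert p.2 (x.erase p.1)) (by
      rw [hxd]; exact singleton_nonempty _)
    have e2 := min'_mem (insert p.2 (x.erase p.1) \ x) (by
      rw [hvd]; exact singleton_nonempty _)
    exact Prod.ext (min'_eq_of_sing hxd (by rw [hxd]; exact singleton_nonempty _))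
      (min'_eq_of_sing hvd (by rw [hvd]; exact singleton_nonempty _))

lemma card_filter_common {n k : ℕ} (hk : 2 ≤ k) {x y : Finset (Fin n)} {a b : Fin n}
    (hx : x.card = k) (hy : y.card = k)
    (ha : x \ y = {a}) (hb : y \ x = {b}) :
    (univ.filter (fun v : JV n k =>
      (v.1 ∩ x).card = k - 1 ∧ (v.1 ∩ y).card = k - 1)).card = n - 2 := by
  set A := x ∩ y with hA
  have hax : a ∈ x := by have := mem_singleton_self a; rw [← ha] at this; exact (mem_sdiff.mp this).1
  have hay : a ∉ y := by have := mem_singleton_self a; rw [← ha] at this; exact (mem_sdiff.mp this).2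
  have hby : b ∈ y := by have := mem_singleton_self b; rw [← hb] at this; exact (mem_sdiff.mp this).1
  have hbx : b ∉ x := by have := mem_singleton_self b; rw [← hb] at this; exact (mem_sdiff.mp this).2
  have hab : a ≠ b := fun h => hbx (h ▸ hax)
  have haA : a ∉ A := fun h => hay (mem_inter.mp h).2
  have hbA : b ∉ A := fun h => hbx (mem_inter.mp h).1
  have hAx : A ⊆ x := inter_subset_left
  have hAy : A ⊆ y := inter_subset_right
  have hAc : A.card = k - 1 := by
    have := card_sdiff_add_card_inter x y
    rw [ha] at this; simp at this; rw [hA]; omega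
  have hxA : x = insert a A := by rw [insert_eq, ← ha, hA, Finset.sdiff_union_inter]
  have hyA : y = insert b A := by
    rw [insert_eq, ← hb, hA, inter_comm, Finset.sdiff_union_inter]
  -- structural facts about common neighbours
  have key : ∀ v : Finset (Fin n), v.card = k → (v ∩ x).card = k - 1 →
      (v ∩ y).card = k - 1 →
      (a ∈ v → b ∈ v ∧ (A \ v).card = 1 ∧ v = insert a (insert b (v ∩ A))) ∧
      (a ∉ v → b ∉ v ∧ (v \ A).card = 1 ∧ A ⊆ v) := by
    intro v hvc h1 h2
    constructor
    · intro hav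
      have hvA : (v ∩ A).card = k - 2 := by
        rw [hxA, inter_insert_of_mem hav, card_insert_of_notMem
          (fun h => haA (mem_inter.mp h).2)] at h1
        omega
      have hbv : b ∈ v := by
        by_contra hbv
        rw [hyA, inter_insert_of_notMem hbv, hvA] at h2
        omega
      have hAv : (A \ v).card = 1 := by
        have := card_sdiff_add_card_inter A v
        rw [inter_comm] at this; omega
      refine ⟨hbv, hAv, ?_⟩
      have hsub : insert a (insert b (v ∩ A)) ⊆ v := by
        intro c hc
        rcases mem_insert.mp hc with rfl | hc
        · exact hav
        rcases mem_insert.mp hc with rfl | hc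
        · exact hbv
        · exact (mem_inter.mp hc).1
      have hcard : v.card ≤ (insert a (insert b (v ∩ A))).card := by
        rw [card_insert_of_notMem (by
            simp only [mem_insert]
            push_neg
            exact ⟨hab, fun h => haA (mem_inter.mp h).2⟩),
          card_insert_of_notMem (fun h => hbA (mem_inter.mp h).2), hvA, hvc]
        omega
      exact (eq_of_subset_of_card_le hsub hcard).symm
    · intro hav
      have hvA : (v ∩ A).card = k - 1 := by
        rwa [hxA, inter_insert_of_notMem hav] at h1
      have hbv : b ∉ v := by
        intro hbv
        rw [hyA, inter_insert_of_mem hbv, card_insert_of_notMem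
          (fun h => hbA (mem_inter.mp h).2), hvA] at h2
        omega
      have hAsub : A ⊆ v := by
        have : v ∩ A = A := eq_of_subset_of_card_le (inter_subset_right) (by omega)
        rw [← this]; exact inter_subset_left
      have : (v \ A).card = 1 := by
        have := card_sdiff_add_card_inter v A
        omega
      exact ⟨hbv, this, hAsub⟩
  have htc : (univ \ ({a, b} : Finset (Fin n))).card = n - 2 := by
    rw [card_sdiff_of_subset (subset_univ _), card_univ, Fintype.card_fin,
      card_insert_of_notMem (by simpa using hab), card_singleton]
  rw [← htc]
  -- the value set extraction lemma: for common neighbours v,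
  -- the if-set is a singleton {e} with explicit description
  have hne : ∀ (v : JV n k), v ∈ univ.filter (fun v : JV n k =>
      (v.1 ∩ x).card = k - 1 ∧ (v.1 ∩ y).card = k - 1) →
      (if a ∈ v.1 then A \ v.1 else v.1 \ A).Nonempty := by
    intro v hv
    have hm := mem_filter.mp hv
    by_cases h : a ∈ v.1
    · rw [if_pos h]
      have := ((key v.1 v.2 hm.2.1 hm.2.2).1 h).2.1
      exact card_pos.mp (by omega)
    · rw [if_neg h]
      have := ((key v.1 v.2 hm.2.1 hm.2.2).2 h).2.1
      exact card_pos.mp (by omega)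
  refine card_bij (i := fun (v : JV n k) hv =>
      (if a ∈ v.1 then A \ v.1 else v.1 \ A).min' (hne v hv)) ?_ ?_ ?_
  · -- maps into univ \ {a, b}
    intro v hv
    have hm := mem_filter.mp hv
    simp only [mem_sdiff, mem_univ, true_and, mem_insert, mem_singleton]
    push_neg
    by_cases h : a ∈ v.1
    · obtain ⟨c, hc⟩ := card_eq_one.mp ((key v.1 v.2 hm.2.1 hm.2.2).1 h).2.1
      have hset : (if a ∈ v.1 then A \ v.1 else v.1 \ A) = {c} := by
        rw [if_pos h]; exact hc
      rw [min'_eq_of_sing hset (hne v hv)]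
      have hcA : c ∈ A := (mem_sdiff.mp (hc ▸ mem_singleton_self c)).1
      exact ⟨fun h2 => haA (h2 ▸ hcA), fun h2 => hbA (h2 ▸ hcA)⟩
    · obtain ⟨c, hc⟩ := card_eq_one.mp ((key v.1 v.2 hm.2.1 hm.2.2).2 h).2.1
      have hset : (if a ∈ v.1 then A \ v.1 else v.1 \ A) = {c} := by
        rw [if_neg h]; exact hc
      rw [min'_eq_of_sing hset (hne v hv)]
      have hcv : c ∈ v.1 := (mem_sdiff.mp (hc ▸ mem_singleton_self c)).1
      have hbv := ((key v.1 v.2 hm.2.1 hm.2.2).2 h).1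
      exact ⟨fun h2 => h (h2 ▸ hcv), fun h2 => hbv (h2 ▸ hcv)⟩
  · -- injective
    intro v hv v' hv' heq
    have hm := mem_filter.mp hv
    have hm' := mem_filter.mp hv'
    by_cases h : a ∈ v.1 <;> by_cases h' : a ∈ v'.1
    · have k1 := (key v.1 v.2 hm.2.1 hm.2.2).1 h
      have k1' := (key v'.1 v'.2 hm'.2.1 hm'.2.2).1 h'
      obtain ⟨c, hc⟩ := card_eq_one.mp k1.2.1
      obtain ⟨c', hc'⟩ := card_eq_one.mp k1'.2.1
      have hset : (if a ∈ v.1 then A \ v.1 else v.1 \ A) = {c} := by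
        rw [if_pos h]; exact hc
      have hset' : (if a ∈ v'.1 then A \ v'.1 else v'.1 \ A) = {c'} := by
        rw [if_pos h']; exact hc'
      rw [min'_eq_of_sing hset (hne v hv), min'_eq_of_sing hset' (hne v' hv')] at heq
      subst heq
      have hint : v.1 ∩ A = v'.1 ∩ A := by
        have e1 : A \ (A \ v.1) = A \ (A \ v'.1) := by rw [hc, hc']
        rwa [sdiff_sdiff_self_left, sdiff_sdiff_self_left, inter_comm A v.1,
          inter_comm A v'.1] at e1
      apply Subtype.ext
      rw [k1.2.2, k1'.2.2, hint]
    · obtain ⟨c, hc⟩ := card_eq_one.mp ((key v.1 v.2 hm.2.1 hm.2.2).1 h).2.1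
      obtain ⟨c', hc'⟩ := card_eq_one.mp ((key v'.1 v'.2 hm'.2.1 hm'.2.2).2 h').2.1
      have hset : (if a ∈ v.1 then A \ v.1 else v.1 \ A) = {c} := by
        rw [if_pos h]; exact hc
      have hset' : (if a ∈ v'.1 then A \ v'.1 else v'.1 \ A) = {c'} := by
        rw [if_neg h']; exact hc'
      rw [min'_eq_of_sing hset (hne v hv), min'_eq_of_sing hset' (hne v' hv')] at heq
      subst heq
      exact absurd (mem_sdiff.mp (hc ▸ mem_singleton_self c)).1
        (mem_sdiff.mp (hc' ▸ mem_singleton_self c)).2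
    · obtain ⟨c, hc⟩ := card_eq_one.mp ((key v.1 v.2 hm.2.1 hm.2.2).2 h).2.1
      obtain ⟨c', hc'⟩ := card_eq_one.mp ((key v'.1 v'.2 hm'.2.1 hm'.2.2).1 h').2.1
      have hset : (if a ∈ v.1 then A \ v.1 else v.1 \ A) = {c} := by
        rw [if_neg h]; exact hc
      have hset' : (if a ∈ v'.1 then A \ v'.1 else v'.1 \ A) = {c'} := by
        rw [if_pos h']; exact hc'
      rw [min'_eq_of_sing hset (hne v hv), min'_eq_of_sing hset' (hne v' hv')] at heq
      subst heq
      exact absurd (mem_sdiff.mp (hc' ▸ mem_singleton_self c)).1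
        (mem_sdiff.mp (hc ▸ mem_singleton_self c)).2
    · have k2 := (key v.1 v.2 hm.2.1 hm.2.2).2 h
      have k2' := (key v'.1 v'.2 hm'.2.1 hm'.2.2).2 h'
      obtain ⟨c, hc⟩ := card_eq_one.mp k2.2.1
      obtain ⟨c', hc'⟩ := card_eq_one.mp k2'.2.1
      have hset : (if a ∈ v.1 then A \ v.1 else v.1 \ A) = {c} := by
        rw [if_neg h]; exact hc
      have hset' : (if a ∈ v'.1 then A \ v'.1 else v'.1 \ A) = {c'} := by
        rw [if_neg h']; exact hc'
      rw [min'_eq_of_sing hset (hne v hv), min'_eq_of_sing hset' (hne v' hv')] at heq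
      subst heq
      apply Subtype.ext
      rw [← sdiff_union_of_subset k2.2.2, ← sdiff_union_of_subset k2'.2.2, hc, hc']
  · -- surjective
    intro e he
    simp only [mem_sdiff, mem_univ, true_and, mem_insert, mem_singleton] at he
    push_neg at he
    by_cases h : e ∈ A
    · refine ⟨⟨insert a (insert b (A.erase e)), ?_⟩, ?_, ?_⟩
      · rw [card_insert_of_notMem (by
            simp only [mem_insert]
            push_neg
            exact ⟨hab, fun hc => haA (mem_of_mem_erase hc)⟩),
          card_insert_of_notMem (fun hc => hbA (mem_of_mem_erase hc)),
          card_erase_of_mem h, hAc]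
        omega
      · simp only [mem_filter, mem_univ, true_and]
        constructor
        · show (insert a (insert b (A.erase e)) ∩ x).card = k - 1
          have : insert a (insert b (A.erase e)) ∩ x = insert a (A.erase e) := by
            rw [insert_inter_of_mem hax, insert_inter_of_notMem hbx,
              inter_eq_left.mpr (fun c hc => hAx (mem_of_mem_erase hc))]
          rw [this, card_insert_of_notMem (fun hc => haA (mem_of_mem_erase hc)),
            card_erase_of_mem h, hAc]
          omega
        · show (insert a (insert b (A.erase e)) ∩ y).card = k - 1
          have : insert a (insert b (A.erase e)) ∩ y = insert b (A.erase e) := by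
            rw [insert_inter_of_notMem hay, insert_inter_of_mem hby,
              inter_eq_left.mpr (fun c hc => hAy (mem_of_mem_erase hc))]
          rw [this, card_insert_of_notMem (fun hc => hbA (mem_of_mem_erase hc)),
            card_erase_of_mem h, hAc]
          omega
      · have hav : a ∈ (insert a (insert b (A.erase e)) : Finset (Fin n)) := mem_insert_self _ _
        apply min'_eq_of_sing
        rw [if_pos hav]
        ext c
        simp only [mem_sdiff, mem_insert, mem_erase, mem_singleton]
        constructor
        · rintro ⟨hcA, hc⟩
          push_neg at hc
          by_contra hne2
          exact hc.2.2 hne2 hcA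
        · rintro rfl
          push_neg
          exact ⟨h, fun hc => haA (hc ▸ h), fun hc => hbA (hc ▸ h), fun hc _ => (hc rfl).elim⟩
    · refine ⟨⟨insert e A, by rw [card_insert_of_notMem h, hAc]; omega⟩, ?_, ?_⟩
      · have hex : e ∉ x := by
          rw [hxA]; simp only [mem_insert]; push_neg; exact ⟨he.1, h⟩
        have hey : e ∉ y := by
          rw [hyA]; simp only [mem_insert]; push_neg; exact ⟨he.2, h⟩
        simp only [mem_filter, mem_univ, true_and]
        constructor
        · show (insert e A ∩ x).card = k - 1
          rw [insert_inter_of_notMem hex, inter_eq_left.mpr hAx, hAc]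
        · show (insert e A ∩ y).card = k - 1
          rw [insert_inter_of_notMem hey, inter_eq_left.mpr hAy, hAc]
      · have hav : a ∉ (insert e A : Finset (Fin n)) := by
          simp only [mem_insert]; push_neg; exact ⟨fun hc => he.1 hc.symm, haA⟩
        apply min'_eq_of_sing
        rw [if_neg hav, insert_sdiff_of_notMem _ h, sdiff_self]
        simp


/-- For `k ≥ 3`, `n ≥ k+3` and adjacent vertices `x, y` of `J(n,k)`, the set of
all neighbours of `x` or `y` other than `x` and `y` has size `(2k-1)(n-k) - k`
and is a super vertex-cut. -/
theorem neighbors_of_edge_superVertexCut (n k : ℕ) (hk : 3 ≤ k) (hn : k + 3 ≤ n)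
    (x y : JV n k) (hxy : (johnsonGraph n k).Adj x y) :
    (((johnsonGraph n k).neighborSet x ∪ (johnsonGraph n k).neighborSet y) \
        ({x, y} : Set (JV n k))).ncard = (2 * k - 1) * (n - k) - k ∧
    IsSuperVertexCut (johnsonGraph n k)
      (((johnsonGraph n k).neighborSet x ∪ (johnsonGraph n k).neighborSet y) \
        ({x, y} : Set (JV n k))) := by
  obtain ⟨hne, hI⟩ := hxy
  set G := johnsonGraph n k with hG
  set S : Set (JV n k) :=
    ((G.neighborSet x ∪ G.neighborSet y) \ ({x, y} : Set (JV n k))) with hSdef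
  have hadj_iff : ∀ u v : JV n k, G.Adj u v ↔ (v.1 ∩ u.1).card = k - 1 := by
    intro u v
    constructor
    · intro h; rw [inter_comm]; exact h.2
    · intro h
      refine ⟨fun hc => ?_, by rw [inter_comm]; exact h⟩
      subst hc
      rw [inter_self, u.2] at h
      omega
  have hSmem : ∀ v : JV n k, v ∈ S ↔
      ((v.1 ∩ x.1).card = k - 1 ∨ (v.1 ∩ y.1).card = k - 1) ∧ v ≠ x ∧ v ≠ y := by
    intro v
    simp only [hSdef, Set.mem_diff, Set.mem_union, SimpleGraph.mem_neighborSet,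
      hadj_iff, Set.mem_insert_iff, Set.mem_singleton_iff, not_or]
  have hyx : (y.1 ∩ x.1).card = k - 1 := by rw [inter_comm]; exact hI
  obtain ⟨hsb, hsa⟩ := sdiff_card_one (by omega) x.2 y.2 hI
  obtain ⟨b, hb⟩ := card_eq_one.mp hsb
  obtain ⟨a, ha⟩ := card_eq_one.mp hsa
  -- membership facts about the complement
  have hcard_eq : ∀ v w : JV n k, (v.1 ∩ w.1).card = k → v = w := by
    intro v w h
    have h1 : v.1 ∩ w.1 = w.1 :=
      eq_of_subset_of_card_le inter_subset_right (by rw [h, w.2])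
    have h2 : w.1 ⊆ v.1 := by rw [← h1]; exact inter_subset_left
    exact Subtype.ext (eq_of_subset_of_card_le h2 (by rw [v.2, w.2])).symm
  have hxS : x ∈ Sᶜ := by
    rw [Set.mem_compl_iff, hSmem]; exact fun h => h.2.1 rfl
  have hyS : y ∈ Sᶜ := by
    rw [Set.mem_compl_iff, hSmem]; exact fun h => h.2.2 rfl
  have hcompl : ∀ v : JV n k, v ∈ Sᶜ → v ≠ x → v ≠ y →
      (v.1 ∩ x.1).card ≤ k - 2 ∧ (v.1 ∩ y.1).card ≤ k - 2 := by
    intro v hv hvx hvy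
    rw [Set.mem_compl_iff, hSmem] at hv
    push_neg at hv
    have hx1 : ¬((v.1 ∩ x.1).card = k - 1 ∨ (v.1 ∩ y.1).card = k - 1) :=
      fun hd => hvy (hv hd hvx)
    push_neg at hx1
    have hlx : (v.1 ∩ x.1).card ≤ k := by
      calc (v.1 ∩ x.1).card ≤ x.1.card := card_le_card inter_subset_right
      _ = k := x.2
    have hly : (v.1 ∩ y.1).card ≤ k := by
      calc (v.1 ∩ y.1).card ≤ y.1.card := card_le_card inter_subset_right
      _ = k := y.2
    have hnx : (v.1 ∩ x.1).card ≠ k := fun h => hvx (hcard_eq v x h)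
    have hny : (v.1 ∩ y.1).card ≠ k := fun h => hvy (hcard_eq v y h)
    omega
  constructor
  · -- cardinality
    classical
    set Fx := univ.filter (fun v : JV n k => (v.1 ∩ x.1).card = k - 1) with hFx
    set Fy := univ.filter (fun v : JV n k => (v.1 ∩ y.1).card = k - 1) with hFy
    set Sfin : Finset (JV n k) := (Fx ∪ Fy) \ {x, y} with hSfin
    have hScoe : S = ↑Sfin := by
      ext v
      rw [hSmem]
      simp only [hSfin, coe_sdiff, Set.mem_diff, coe_union, Set.mem_union, hFx, hFy,
        coe_filter, Set.mem_setOf_eq, mem_univ, true_and, coe_insert, Set.mem_insert_iff,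
        coe_singleton, Set.mem_singleton_iff, not_or]
    rw [hScoe, Set.ncard_coe_finset]
    have hsub : ({x, y} : Finset (JV n k)) ⊆ Fx ∪ Fy := by
      intro v hv
      rcases mem_insert.mp hv with rfl | hv
      · exact mem_union_right _ (mem_filter.mpr ⟨mem_univ _, hI⟩)
      · rw [mem_singleton] at hv
        subst hv
        exact mem_union_left _ (mem_filter.mpr ⟨mem_univ _, hyx⟩)
    have hpair : ({x, y} : Finset (JV n k)).card = 2 := by
      rw [card_insert_of_notMem (by simpa using hne), card_singleton]
    have hcardFx : Fx.card = k * (n - k) := card_filter_adj (by omega) x.1 x.2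
    have hcardFy : Fy.card = k * (n - k) := card_filter_adj (by omega) y.1 y.2
    have hinter : (Fx ∩ Fy).card = n - 2 := by
      rw [hFx, hFy, ← filter_and]
      exact card_filter_common (by omega) x.2 y.2 ha hb
    have hcup := card_union_add_card_inter Fx Fy
    rw [hcardFx, hcardFy, hinter] at hcup
    rw [hSfin, card_sdiff_of_subset hsub, hpair]
    -- arithmetic
    have e1 : (2 * k - 1) * (n - k) = 2 * (k * (n - k)) - (n - k) := by
      rw [Nat.sub_mul, one_mul, mul_assoc]
    have hkm : k + (n - k) ≤ k * (n - k) := by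
      have h1 : 3 * (n - k) ≤ k * (n - k) := Nat.mul_le_mul_right _ hk
      have h2 : k * 3 ≤ k * (n - k) := Nat.mul_le_mul_left _ (by omega)
      omega
    set t := k * (n - k) with ht
    omega
  constructor
  · -- vertex cut
    intro hconn
    -- construct a far-away vertex z
    obtain ⟨c, hc⟩ : (x.1 ∩ y.1).Nonempty := card_pos.mp (by omega)
    have hcard_xy : (x.1 ∪ y.1).card = k + 1 := by
      have := card_union_add_card_inter x.1 y.1
      rw [hI, x.2, y.2] at this
      omega
    have houts : 1 < (univ \ (x.1 ∪ y.1)).card := by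
      rw [card_sdiff_of_subset (subset_univ _), card_univ, Fintype.card_fin, hcard_xy]
      omega
    obtain ⟨w1, hw1, w2, hw2, hw12⟩ := one_lt_card.mp houts
    have hw1m := mem_sdiff.mp hw1
    have hw2m := mem_sdiff.mp hw2
    have hw1x : w1 ∉ x.1 := fun h => hw1m.2 (mem_union_left _ h)
    have hw1y : w1 ∉ y.1 := fun h => hw1m.2 (mem_union_right _ h)
    have hw2x : w2 ∉ x.1 := fun h => hw2m.2 (mem_union_left _ h)
    have hw2y : w2 ∉ y.1 := fun h => hw2m.2 (mem_union_right _ h)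
    set zs : Finset (Fin n) := insert w1 (insert w2 ((x.1 ∩ y.1).erase c)) with hzs
    have hcxy := mem_inter.mp hc
    have hzcard : zs.card = k := by
      rw [hzs, card_insert_of_notMem (by
          simp only [mem_insert, mem_erase]
          push_neg
          exact ⟨hw12, fun _ h => hw1x (mem_inter.mp h).1⟩),
        card_insert_of_notMem (fun h => hw2x (mem_inter.mp (mem_of_mem_erase h)).1),
        card_erase_of_mem hc, hI]
      omega
    have hzx : (zs ∩ x.1).card = k - 2 := by
      rw [hzs, insert_inter_of_notMem hw1x, insert_inter_of_notMem hw2x,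
        inter_eq_left.mpr (fun d hd => (mem_inter.mp (mem_of_mem_erase hd)).1),
        card_erase_of_mem hc, hI]
      omega
    have hzy : (zs ∩ y.1).card = k - 2 := by
      rw [hzs, insert_inter_of_notMem hw1y, insert_inter_of_notMem hw2y,
        inter_eq_left.mpr (fun d hd => (mem_inter.mp (mem_of_mem_erase hd)).2),
        card_erase_of_mem hc, hI]
      omega
    set z : JV n k := ⟨zs, hzcard⟩ with hzdef
    have hzS : z ∈ Sᶜ := by
      rw [Set.mem_compl_iff, hSmem]
      rintro ⟨h1 | h1, -⟩
      · rw [show z.1 = zs from rfl, hzx] at h1; omega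
      · rw [show z.1 = zs from rfl, hzy] at h1; omega
    have hzx' : z ≠ x := by
      intro h
      have := hzx
      rw [show zs = z.1 from rfl, h, inter_self, x.2] at this
      omega
    have hzy' : z ≠ y := by
      intro h
      have := hzy
      rw [show zs = z.1 from rfl, h, inter_self, y.2] at this
      omega
    -- the walk argument
    have hclosed : ∀ (uu ww : ↥Sᶜ), (G.induce Sᶜ).Adj uu ww →
        (uu.1 = x ∨ uu.1 = y) → (ww.1 = x ∨ ww.1 = y) := by
      intro uu ww hadj huu
      have hadj' : G.Adj uu.1 ww.1 := hadj
      by_contra hww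
      push_neg at hww
      have hbound := hcompl ww.1 ww.2 hww.1 hww.2
      rcases huu with h1 | h1
      · rw [h1, hadj_iff] at hadj'
        omega
      · rw [h1, hadj_iff] at hadj'
        omega
    have hwalk : ∀ (uu ww : ↥Sᶜ) (_ : (G.induce Sᶜ).Walk uu ww),
        (uu.1 = x ∨ uu.1 = y) → (ww.1 = x ∨ ww.1 = y) := by
      intro uu ww p
      induction p with
      | nil => exact id
      | cons h p ih => exact fun hu => ih (hclosed _ _ h hu)
    obtain ⟨p⟩ := hconn ⟨x, hxS⟩ ⟨z, hzS⟩
    rcases hwalk _ _ p (Or.inl rfl) with h | h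
    · exact hzx' h
    · exact hzy' h
  · -- no isolated vertices
    rintro ⟨v, hv⟩
    by_cases hvx : v = x
    · subst hvx
      exact ⟨⟨y, hyS⟩, show G.Adj v y from ⟨hne, hI⟩⟩
    by_cases hvy : v = y
    · subst hvy
      exact ⟨⟨x, hxS⟩, show G.Adj v x from ⟨Ne.symm hne, hyx⟩⟩
    obtain ⟨hpx, hpy⟩ := hcompl v hv hvx hvy
    have hvcard := v.2
    have hfinish : ∀ u e, u ∈ v.1 → e ∉ v.1 →
        (insert e (v.1.erase u) ∩ x.1).card ≤ k - 2 →
        (insert e (v.1.erase u) ∩ y.1).card ≤ k - 2 →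
        ∃ w : ↥Sᶜ, (G.induce Sᶜ).Adj ⟨v, hv⟩ w := by
      intro u e hu he hbx hby
      have hwcard : (insert e (v.1.erase u)).card = k := by
        rw [swap_card hu he, v.2]
      set w : JV n k := ⟨insert e (v.1.erase u), hwcard⟩ with hwdef
      have hwS : w ∈ Sᶜ := by
        rw [Set.mem_compl_iff, hSmem]
        rintro ⟨h1 | h1, -⟩
        · rw [show w.1 = insert e (v.1.erase u) from rfl] at h1; omega
        · rw [show w.1 = insert e (v.1.erase u) from rfl] at h1; omega
      refine ⟨⟨w, hwS⟩, ?_⟩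
      show G.Adj v w
      refine ⟨fun hvw => swap_ne (u := u) he (congrArg Subtype.val hvw.symm), ?_⟩
      rw [show w.1 = insert e (v.1.erase u) from rfl, inter_comm,
        swap_inter_self hu he, v.2]
    have hex_e : (univ \ v.1).Nonempty := card_pos.mp (by
      rw [card_sdiff_of_subset (subset_univ _), card_univ, Fintype.card_fin, v.2]; omega)
    by_cases hp : (v.1 ∩ x.1).card = k - 2 <;>
      by_cases hq : (v.1 ∩ y.1).card = k - 2
    · -- both k-2
      by_cases hvxy : (v.1 ∩ x.1 ∩ y.1).Nonempty
      · obtain ⟨u, hu'⟩ := hvxy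
        obtain ⟨hu'', huy⟩ := mem_inter.mp hu'
        obtain ⟨hu, hux⟩ := mem_inter.mp hu''
        obtain ⟨e, he'⟩ := hex_e
        have he := (mem_sdiff.mp he').2
        apply hfinish u e hu he
        · exact le_trans (swap_inter_le_of_mem hu hux) (le_of_eq hp)
        · exact le_trans (swap_inter_le_of_mem hu huy) (le_of_eq hq)
      · obtain ⟨u, hu'⟩ : (v.1 ∩ x.1).Nonempty := card_pos.mp (by omega)
        obtain ⟨hu, hux⟩ := mem_inter.mp hu'
        have huy : u ∉ y.1 := fun h => hvxy ⟨u, mem_inter.mpr ⟨hu', h⟩⟩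
        have hvy_card : (v.1 ∪ y.1).card = k + 2 := by
          have := card_union_add_card_inter v.1 y.1
          rw [hq, v.2, y.2] at this
          omega
        obtain ⟨e, he'⟩ : (univ \ (v.1 ∪ y.1)).Nonempty := card_pos.mp (by
          rw [card_sdiff_of_subset (subset_univ _), card_univ, Fintype.card_fin, hvy_card]; omega)
        have he'' := (mem_sdiff.mp he').2
        have he : e ∉ v.1 := fun h => he'' (mem_union_left _ h)
        have hey : e ∉ y.1 := fun h => he'' (mem_union_right _ h)
        apply hfinish u e hu he
        · exact le_trans (swap_inter_le_of_mem hu hux) (le_of_eq hp)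
        · exact le_trans (swap_inter_le_of_not_mem hey) (le_of_eq hq)
    · -- p = k-2, q ≤ k-3
      obtain ⟨u, hu'⟩ : (v.1 ∩ x.1).Nonempty := card_pos.mp (by omega)
      obtain ⟨hu, hux⟩ := mem_inter.mp hu'
      obtain ⟨e, he'⟩ := hex_e
      have he := (mem_sdiff.mp he').2
      apply hfinish u e hu he
      · exact le_trans (swap_inter_le_of_mem hu hux) (le_of_eq hp)
      · exact le_trans swap_inter_le_succ (by omega)
    · -- q = k-2, p ≤ k-3
      obtain ⟨u, hu'⟩ : (v.1 ∩ y.1).Nonempty := card_pos.mp (by omega)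
      obtain ⟨hu, huy⟩ := mem_inter.mp hu'
      obtain ⟨e, he'⟩ := hex_e
      have he := (mem_sdiff.mp he').2
      apply hfinish u e hu he
      · exact le_trans swap_inter_le_succ (by omega)
      · exact le_trans (swap_inter_le_of_mem hu huy) (le_of_eq hq)
    · -- both ≤ k-3
      obtain ⟨u, hu⟩ : v.1.Nonempty := card_pos.mp (by rw [v.2]; omega)
      obtain ⟨e, he'⟩ := hex_e
      have he := (mem_sdiff.mp he').2
      apply hfinish u e hu he
      · exact le_trans swap_inter_le_succ (by omega)
      · exact le_trans swap_inter_le_succ (by omega)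
end
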